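/- arXiv:2103.16075 — 12 statements merged into one kernel-verified Lean document; each statement's English description precedes it below -/
import Mathlib

section
/- Let ρ be the standard normal density ρ(x) = (2π)^{-1/2} exp(-x²/2) with CDF Φ, and let ψ(x) = exp(-x²/(2α)) for α > 0. Then ∫_{-∞}^c (Φ(t))²/ψ(t) dt < ∞ and ∫_c^∞ (1-Φ(t))²/ψ(t) dt < ∞ for all finite c if and only if α ≥ 1/2. -/
open MeasureTheory Real Set Filter Topology

noncomputable section

namespace Stmt2Aux

lemma sqrt2pi_pos : 0 < Real.sqrt (2 * π) := Real.sqrt_pos.2 (by positivity)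

lemma C_pos : 0 < (Real.sqrt (2 * π))⁻¹ := inv_pos.2 sqrt2pi_pos

lemma exp_form (x : ℝ) : Real.exp (-x ^ 2 / 2) = Real.exp (-(1 / 2 : ℝ) * x ^ 2) := by
  rw [show -x ^ 2 / 2 = -(1 / 2 : ℝ) * x ^ 2 by ring]

lemma rho_int : Integrable (fun x : ℝ => (Real.sqrt (2 * π))⁻¹ * Real.exp (-x ^ 2 / 2)) := by
  simp only [exp_form]
  exact (integrable_exp_neg_mul_sq (by norm_num : (0:ℝ) < 1/2)).const_mul _

lemma rho_total : ∫ x : ℝ, (Real.sqrt (2 * π))⁻¹ * Real.exp (-x ^ 2 / 2) = 1 := by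
  simp only [exp_form]
  rw [integral_const_mul, integral_gaussian, show π / (1/2 : ℝ) = 2 * π by ring]
  exact inv_mul_cancel₀ (ne_of_gt sqrt2pi_pos)

lemma xexp_int : Integrable (fun x : ℝ => x * Real.exp (-x ^ 2 / 2)) := by
  simp only [exp_form]
  exact integrable_mul_exp_neg_mul_sq (by norm_num : (0:ℝ) < 1/2)

lemma deriv_aux (x : ℝ) :
    HasDerivAt (fun y : ℝ => -Real.exp (-y ^ 2 / 2)) (x * Real.exp (-x ^ 2 / 2)) x := by
  have h1 : HasDerivAt (fun y : ℝ => -y ^ 2 / 2) (-x) x := by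
    have : HasDerivAt (fun y : ℝ => -y ^ 2 / 2) (-((2:ℕ) * x ^ (2 - 1)) / 2) x :=
      ((hasDerivAt_pow 2 x).neg).div_const (2 : ℝ)
    convert this using 1
    push_cast
    ring
  have h3 : HasDerivAt (fun y : ℝ => -Real.exp (-y ^ 2 / 2)) (-(Real.exp (-x ^ 2 / 2) * -x)) x :=
    (h1.exp).neg
  convert h3 using 1
  ring

lemma tail_int_eq (s : ℝ) :
    ∫ x in Ioi s, x * Real.exp (-x ^ 2 / 2) = Real.exp (-s ^ 2 / 2) := by
  have htend : Tendsto (fun y : ℝ => -Real.exp (-y ^ 2 / 2)) atTop (𝓝 0) := by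
    rw [← neg_zero]
    apply Tendsto.neg
    apply Real.tendsto_exp_atBot.comp
    have h4 : Tendsto (fun y : ℝ => y ^ 2 / 2) atTop atTop :=
      (tendsto_pow_atTop two_ne_zero).atTop_div_const (by norm_num)
    have h5 := tendsto_neg_atTop_atBot.comp h4
    refine h5.congr (fun y => ?_)
    simp [neg_div, Function.comp]
  have := integral_Ioi_of_hasDerivAt_of_tendsto' (a := s)
      (f := fun y : ℝ => -Real.exp (-y ^ 2 / 2)) (f' := fun x => x * Real.exp (-x ^ 2 / 2))
      (m := 0) (fun x _ => deriv_aux x) xexp_int.integrableOn htend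
  rw [this]
  ring

lemma tail_bound {s : ℝ} (hs : 0 < s) :
    ∫ x in Ioi s, (Real.sqrt (2 * π))⁻¹ * Real.exp (-x ^ 2 / 2)
      ≤ (Real.sqrt (2 * π))⁻¹ * Real.exp (-s ^ 2 / 2) / s := by
  set Cc := (Real.sqrt (2 * π))⁻¹ with hCc
  have hC : 0 < Cc := C_pos
  have key : ∫ x in Ioi s, Cc * Real.exp (-x ^ 2 / 2)
      ≤ ∫ x in Ioi s, (Cc / s) * (x * Real.exp (-x ^ 2 / 2)) := by
    apply setIntegral_mono_on rho_int.integrableOn (xexp_int.const_mul _).integrableOn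
      measurableSet_Ioi
    intro x hx
    have hx' : s ≤ x := le_of_lt hx
    have he : (0:ℝ) < Real.exp (-x ^ 2 / 2) := Real.exp_pos _
    have h1 : Cc * Real.exp (-x ^ 2 / 2) = (Cc / s) * (s * Real.exp (-x ^ 2 / 2)) := by
      field_simp
    rw [h1]
    exact mul_le_mul_of_nonneg_left (mul_le_mul_of_nonneg_right hx' he.le) (by positivity)
  have key2 : ∫ x in Ioi s, (Cc / s) * (x * Real.exp (-x ^ 2 / 2))
      = (Cc / s) * Real.exp (-s ^ 2 / 2) := by
    rw [integral_const_mul, tail_int_eq]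
  rw [key2] at key
  rwa [div_mul_eq_mul_div] at key

lemma invsq_Ioi : IntegrableOn (fun t : ℝ => (t ^ 2)⁻¹) (Ioi (1:ℝ)) := by
  have h := integrableOn_Ioi_rpow_of_lt (show (-2:ℝ) < -1 by norm_num) zero_lt_one
  apply h.congr_fun ?_ measurableSet_Ioi
  intro x hx
  have hx0 : (0:ℝ) ≤ x := le_of_lt (lt_trans zero_lt_one hx)
  show x ^ (-2 : ℝ) = (x ^ 2)⁻¹
  rw [Real.rpow_neg hx0, show (2:ℝ) = ((2:ℕ):ℝ) by norm_num, Real.rpow_natCast]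

lemma invsq_Ici : IntegrableOn (fun t : ℝ => (t ^ 2)⁻¹) (Ici (1:ℝ)) := by
  rw [integrableOn_Ici_iff_integrableOn_Ioi]
  exact invsq_Ioi

lemma invsq_Iic : IntegrableOn (fun t : ℝ => (t ^ 2)⁻¹) (Iic (-1:ℝ)) := by
  have A : MeasurableEmbedding (fun x : ℝ => -x) :=
    (Homeomorph.neg ℝ).isClosedEmbedding.measurableEmbedding
  have hmap : (volume : Measure ℝ).restrict (Iic (-1:ℝ))
      = Measure.map (fun x : ℝ => -x) (volume.restrict (Ici (1:ℝ))) := by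
    conv_lhs => rw [← Measure.map_neg_eq_self (volume : Measure ℝ)]
    rw [Measure.restrict_map A.measurable measurableSet_Iic]
    congr 1
    ext x
    simp
  rw [IntegrableOn, hmap, A.integrable_map_iff]
  have heq : ((fun t : ℝ => (t ^ 2)⁻¹) ∘ fun x : ℝ => -x) = fun t : ℝ => (t ^ 2)⁻¹ := by
    funext x
    simp
  rw [heq]
  exact invsq_Ici

end Stmt2Aux

end

open Stmt2Aux

theorem stmt2 (α : ℝ) (hα : 0 < α) (ρ Φ ψ : ℝ → ℝ)
    (hρ : ∀ x, ρ x = (Real.sqrt (2 * π))⁻¹ * Real.exp (-x ^ 2 / 2))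
    (hΦ : ∀ x, Φ x = ∫ t in Iic x, ρ t)
    (hψ : ∀ x, ψ x = Real.exp (-x ^ 2 / (2 * α))) :
    (∀ c : ℝ, IntegrableOn (fun t => Φ t ^ 2 / ψ t) (Iic c) ∧
        IntegrableOn (fun t => (1 - Φ t) ^ 2 / ψ t) (Ici c)) ↔ 1 / 2 ≤ α := by
  obtain rfl : ρ = fun x : ℝ => (Real.sqrt (2 * π))⁻¹ * Real.exp (-x ^ 2 / 2) := funext hρ
  set Cc := (Real.sqrt (2 * π))⁻¹ with hCc
  have hC : 0 < Cc := C_pos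
  have hρ_int : Integrable (fun x : ℝ => Cc * Real.exp (-x ^ 2 / 2)) := rho_int
  have hρ_nonneg : ∀ x : ℝ, 0 ≤ Cc * Real.exp (-x ^ 2 / 2) :=
    fun x => by positivity
  have hψpos : ∀ x, 0 < ψ x := fun x => by rw [hψ]; exact Real.exp_pos _
  have hψmeas : Measurable ψ := by
    have : ψ = fun x => Real.exp (-x ^ 2 / (2 * α)) := funext hψ
    rw [this]
    exact Real.measurable_exp.comp ((measurable_id.pow_const 2).neg.div_const (2 * α))
  have hmono : Monotone Φ := by
    intro a b hab
    rw [hΦ a, hΦ b]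
    exact setIntegral_mono_set hρ_int.integrableOn
      (Eventually.of_forall hρ_nonneg) (Iic_subset_Iic.2 hab).eventuallyLE
  have hΦmeas : Measurable Φ := hmono.measurable
  have hΦ0 : ∀ x, 0 ≤ Φ x := fun x => by
    rw [hΦ x]
    exact setIntegral_nonneg measurableSet_Iic (fun t _ => hρ_nonneg t)
  have hΦle : ∀ x, Φ x ≤ 1 := fun x => by
    rw [hΦ x, ← rho_total]
    exact setIntegral_le_integral hρ_int (Eventually.of_forall hρ_nonneg)
  -- tail identities/bounds
  have h_right : ∀ t : ℝ, 0 < t → 1 - Φ t ≤ Cc * Real.exp (-t ^ 2 / 2) / t := by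
    intro t ht
    have hsplit := intervalIntegral.integral_Iic_add_Ioi (b := t) hρ_int.integrableOn hρ_int.integrableOn
    rw [rho_total] at hsplit
    have h1 : 1 - Φ t = ∫ x in Ioi t, Cc * Real.exp (-x ^ 2 / 2) := by
      rw [hΦ t]; linarith
    rw [h1]
    exact tail_bound ht
  have h_left : ∀ t : ℝ, t < 0 → Φ t ≤ Cc * Real.exp (-t ^ 2 / 2) / (-t) := by
    intro t ht
    have hrefl := integral_comp_neg_Iic t (fun x : ℝ => Cc * Real.exp (-x ^ 2 / 2))
    have heq : Φ t = ∫ x in Ioi (-t), Cc * Real.exp (-x ^ 2 / 2) := by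
      rw [hΦ t, ← hrefl]
      apply setIntegral_congr_fun measurableSet_Iic
      intro x _
      simp only [neg_sq]
    rw [heq]
    have h2 := tail_bound (s := -t) (by linarith)
    simp only [neg_sq] at h2
    exact h2
  -- integrability on compact intervals for any h with 0 ≤ h ≤ 1
  have bdd : ∀ (h : ℝ → ℝ), Measurable h → (∀ x, 0 ≤ h x) → (∀ x, h x ≤ 1) →
      ∀ a b : ℝ, IntegrableOn (fun t => h t ^ 2 / ψ t) (Icc a b) := by
    intro h hm h0 h1 a b
    set M := max |a| |b| with hM
    apply Integrable.mono' (g := fun _ : ℝ => Real.exp (M ^ 2 / (2 * α)))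
      (integrableOn_const measure_Icc_lt_top.ne)
      (((hm.pow_const 2).div hψmeas).aestronglyMeasurable)
    filter_upwards [ae_restrict_mem measurableSet_Icc] with t htmem
    have ht2 : t ^ 2 ≤ M ^ 2 := by
      have h1' : -M ≤ t := by
        have := neg_abs_le a
        have := le_max_left |a| |b|
        linarith [htmem.1]
      have h2' : t ≤ M := by
        have := le_abs_self b
        have := le_max_right |a| |b|
        linarith [htmem.2]
      have := sq_le_sq' h1' h2'
      simpa using this
    have hnn : 0 ≤ h t ^ 2 / ψ t := div_nonneg (sq_nonneg _) (hψpos t).le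
    change ‖h t ^ 2 / ψ t‖ ≤ _
    rw [Real.norm_eq_abs, abs_of_nonneg hnn, div_le_iff₀ (hψpos t)]
    have hone : h t ^ 2 ≤ 1 := pow_le_one₀ (h0 t) (h1 t)
    have hone' : (1:ℝ) ≤ Real.exp (M ^ 2 / (2 * α)) * ψ t := by
      rw [hψ, ← Real.exp_add]
      rw [show M ^ 2 / (2 * α) + -t ^ 2 / (2 * α) = (M ^ 2 - t ^ 2) / (2 * α) by ring]
      have : 0 ≤ (M ^ 2 - t ^ 2) / (2 * α) := div_nonneg (by linarith) (by linarith)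
      linarith [Real.add_one_le_exp ((M ^ 2 - t ^ 2) / (2 * α))]
    linarith
  constructor
  · -- forward: integrability → 1/2 ≤ α
    intro hint
    by_contra hlt
    push_neg at hlt
    obtain ⟨ε, hε⟩ : ∃ ε : ℝ, ε = 1 / (2 * α) - 1 := ⟨_, rfl⟩
    have h2α : (0:ℝ) < 2 * α := by linarith
    have hεpos : 0 < ε := by
      rw [hε, sub_pos, lt_div_iff₀ h2α, one_mul]
      linarith
    -- lower bound for Φ on the left
    have hlow : ∀ t : ℝ, t ≤ -1 → Cc * Real.exp (-(t - 1) ^ 2 / 2) ≤ Φ t := by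
      intro t ht
      have s1 : ∫ x in Icc (t - 1) t, Cc * Real.exp (-x ^ 2 / 2)
          ≤ ∫ x in Iic t, Cc * Real.exp (-x ^ 2 / 2) :=
        setIntegral_mono_set hρ_int.integrableOn (Eventually.of_forall hρ_nonneg)
          (HasSubset.Subset.eventuallyLE Icc_subset_Iic_self)
      have s2 : Cc * Real.exp (-(t - 1) ^ 2 / 2)
          ≤ ∫ x in Icc (t - 1) t, Cc * Real.exp (-x ^ 2 / 2) := by
        have hc : ∫ _x in Icc (t - 1) t, (Cc * Real.exp (-(t - 1) ^ 2 / 2))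
            = Cc * Real.exp (-(t - 1) ^ 2 / 2) := by
          rw [setIntegral_const, Real.volume_real_Icc, show t - (t - 1) = 1 by ring]
          simp
        rw [← hc]
        apply setIntegral_mono_on (integrableOn_const measure_Icc_lt_top.ne)
          hρ_int.integrableOn measurableSet_Icc
        intro x hx
        apply mul_le_mul_of_nonneg_left _ hC.le
        apply Real.exp_le_exp.2
        have hx2 : x ^ 2 ≤ (1 - t) ^ 2 := sq_le_sq' (by linarith [hx.1]) (by linarith [hx.2])
        have : (1 - t) ^ 2 = (t - 1) ^ 2 := by ring
        linarith [hx2, this.symm ▸ hx2]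
      rw [hΦ t]
      linarith
    have H := (hint 0).1
    obtain ⟨L, hL⟩ : ∃ L : ℝ, L = Real.log (Real.sqrt (2 * π)) := ⟨_, rfl⟩
    obtain ⟨K, hK⟩ : ∃ K : ℝ, K = max (1 + 2 * L) 1 := ⟨_, rfl⟩
    have hK1 : (1:ℝ) ≤ K := hK ▸ le_max_right _ _
    obtain ⟨T, hT⟩ : ∃ T : ℝ, T = min (-1) (-(2 + K) / ε) := ⟨_, rfl⟩
    have hT1 : T ≤ -1 := hT ▸ min_le_left _ _
    have hCexp : Cc = Real.exp (-L) := by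
      rw [hCc, hL, Real.exp_neg, Real.exp_log sqrt2pi_pos]
    have key : ∀ t : ℝ, t ≤ T → 1 ≤ Φ t ^ 2 / ψ t := by
      intro t ht
      have ht1 : t ≤ -1 := le_trans ht hT1
      have h1 : Cc * Real.exp (-(t - 1) ^ 2 / 2) ≤ Φ t := hlow t ht1
      have h2 : (Cc * Real.exp (-(t - 1) ^ 2 / 2)) ^ 2 ≤ Φ t ^ 2 :=
        pow_le_pow_left₀ (by positivity) h1 2
      rw [le_div_iff₀ (hψpos t), one_mul]
      have hψle : ψ t ≤ (Cc * Real.exp (-(t - 1) ^ 2 / 2)) ^ 2 := by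
        rw [mul_pow, hCexp, sq, sq, ← Real.exp_add, ← Real.exp_add, ← Real.exp_add, hψ]
        apply Real.exp_le_exp.2
        -- -t^2/(2α) ≤ (-L + -L) + (-(t-1)^2/2 + -(t-1)^2/2)
        have ht' : t ≤ -(2 + K) / ε := le_trans ht (hT ▸ min_le_right _ _)
        have e1 : t * ε ≤ -(2 + K) := (le_div_iff₀ hεpos).1 ht'
        have hKprod : K ≤ (-t) * (-(ε * t + 2)) := by nlinarith
        have hKK : 1 + 2 * L ≤ K := hK ▸ le_max_left _ _
        have e2 : t ^ 2 / (2 * α) = (1 + ε) * t ^ 2 := by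
          rw [div_eq_mul_one_div, hε]
          ring
        rw [show -t ^ 2 / (2 * α) = -(t ^ 2 / (2 * α)) from neg_div _ _, e2]
        nlinarith
      linarith
    have hsub : IntegrableOn (fun t => Φ t ^ 2 / ψ t) (Iic T) :=
      H.mono_set (Iic_subset_Iic.2 (by linarith))
    have hconst : IntegrableOn (fun _ : ℝ => (1:ℝ)) (Iic T) := by
      apply Integrable.mono' hsub aestronglyMeasurable_const
      filter_upwards [ae_restrict_mem measurableSet_Iic] with t ht
      simpa using key t ht
    rw [integrableOn_const_iff] at hconst
    rcases hconst with h | h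
    · norm_num at h
    · rw [Real.volume_Iic] at h
      exact (lt_irrefl _ h).elim
  · -- reverse: 1/2 ≤ α → integrability
    intro hhalf c
    have h2α : (1:ℝ) ≤ 2 * α := by linarith
    constructor
    · -- left piece
      have hA1 : IntegrableOn (fun t => Φ t ^ 2 / ψ t) (Iic (-1)) := by
        apply Integrable.mono' (g := fun t : ℝ => Cc ^ 2 * (t ^ 2)⁻¹)
          (invsq_Iic.const_mul _)
          (((hΦmeas.pow_const 2).div hψmeas).aestronglyMeasurable)
        filter_upwards [ae_restrict_mem measurableSet_Iic] with t ht
        have ht0 : t < 0 := lt_of_le_of_lt ht (by norm_num)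
        have htne : t ≠ 0 := ne_of_lt ht0
        have hnn : 0 ≤ Φ t ^ 2 / ψ t := div_nonneg (sq_nonneg _) (hψpos t).le
        change ‖Φ t ^ 2 / ψ t‖ ≤ _
        rw [Real.norm_eq_abs, abs_of_nonneg hnn, div_le_iff₀ (hψpos t)]
        have h1 : Φ t ≤ Cc * Real.exp (-t ^ 2 / 2) / (-t) := h_left t ht0
        have h2 : Φ t ^ 2 ≤ (Cc * Real.exp (-t ^ 2 / 2) / (-t)) ^ 2 :=
          pow_le_pow_left₀ (hΦ0 t) h1 2
        have hE : Real.exp (-t ^ 2 / 2) ^ 2 ≤ ψ t := by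
          rw [sq, ← Real.exp_add, hψ]
          apply Real.exp_le_exp.2
          have hds : t ^ 2 / (2 * α) ≤ t ^ 2 := div_le_self (sq_nonneg t) h2α
          rw [show -t ^ 2 / (2 * α) = -(t ^ 2 / (2 * α)) from neg_div _ _]
          linarith
        have expand : (Cc * Real.exp (-t ^ 2 / 2) / (-t)) ^ 2
            = Cc ^ 2 * (t ^ 2)⁻¹ * Real.exp (-t ^ 2 / 2) ^ 2 := by
          field_simp
        calc Φ t ^ 2 ≤ Cc ^ 2 * (t ^ 2)⁻¹ * Real.exp (-t ^ 2 / 2) ^ 2 := by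
              rw [← expand]; exact h2
          _ ≤ Cc ^ 2 * (t ^ 2)⁻¹ * ψ t := by
              apply mul_le_mul_of_nonneg_left hE (by positivity)
      have hA2 : IntegrableOn (fun t => Φ t ^ 2 / ψ t) (Icc (-1) c) :=
        bdd Φ hΦmeas hΦ0 hΦle (-1) c
      apply (hA1.union hA2).mono_set
      intro t ht
      by_cases h : t ≤ -1
      · exact Or.inl h
      · exact Or.inr ⟨le_of_not_ge h, ht⟩
    · -- right piece
      have hB1 : IntegrableOn (fun t => (1 - Φ t) ^ 2 / ψ t) (Ici 1) := by
        apply Integrable.mono' (g := fun t : ℝ => Cc ^ 2 * (t ^ 2)⁻¹)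
          (invsq_Ici.const_mul _)
          ((((measurable_const.sub hΦmeas).pow_const 2).div hψmeas).aestronglyMeasurable)
        filter_upwards [ae_restrict_mem measurableSet_Ici] with t ht
        have ht0 : (0:ℝ) < t := lt_of_lt_of_le zero_lt_one ht
        have htne : t ≠ 0 := ne_of_gt ht0
        have hnn : 0 ≤ (1 - Φ t) ^ 2 / ψ t := div_nonneg (sq_nonneg _) (hψpos t).le
        change ‖(1 - Φ t) ^ 2 / ψ t‖ ≤ _
        rw [Real.norm_eq_abs, abs_of_nonneg hnn, div_le_iff₀ (hψpos t)]
        have h1 : 1 - Φ t ≤ Cc * Real.exp (-t ^ 2 / 2) / t := h_right t ht0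
        have h0' : 0 ≤ 1 - Φ t := by linarith [hΦle t]
        have h2 : (1 - Φ t) ^ 2 ≤ (Cc * Real.exp (-t ^ 2 / 2) / t) ^ 2 :=
          pow_le_pow_left₀ h0' h1 2
        have hE : Real.exp (-t ^ 2 / 2) ^ 2 ≤ ψ t := by
          rw [sq, ← Real.exp_add, hψ]
          apply Real.exp_le_exp.2
          have hds : t ^ 2 / (2 * α) ≤ t ^ 2 := div_le_self (sq_nonneg t) h2α
          rw [show -t ^ 2 / (2 * α) = -(t ^ 2 / (2 * α)) from neg_div _ _]
          linarith
        have expand : (Cc * Real.exp (-t ^ 2 / 2) / t) ^ 2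
            = Cc ^ 2 * (t ^ 2)⁻¹ * Real.exp (-t ^ 2 / 2) ^ 2 := by
          field_simp
        calc (1 - Φ t) ^ 2 ≤ Cc ^ 2 * (t ^ 2)⁻¹ * Real.exp (-t ^ 2 / 2) ^ 2 := by
              rw [← expand]; exact h2
          _ ≤ Cc ^ 2 * (t ^ 2)⁻¹ * ψ t := by
              apply mul_le_mul_of_nonneg_left hE (by positivity)
      have hB2 : IntegrableOn (fun t => (1 - Φ t) ^ 2 / ψ t) (Icc c 1) := by
        have := bdd (fun t => 1 - Φ t) (measurable_const.sub hΦmeas)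
          (fun x => by show (0:ℝ) ≤ 1 - Φ x; linarith [hΦle x])
          (fun x => by show 1 - Φ x ≤ 1; linarith [hΦ0 x]) c 1
        exact this
      apply (hB2.union hB1).mono_set
      intro t ht
      by_cases h : t ≤ 1
      · exact Or.inl ⟨ht, h⟩
      · exact Or.inr (le_of_not_ge h)
end

section
/- Let ρ be the standard normal density with CDF Φ, and let ψ(x) = exp(-x²/(2α)) for α > 0. Then ∫_{-∞}^c Φ(t)/ψ(t) dt < ∞ and ∫_c^∞ (1-Φ(t))/ψ(t) dt < ∞ for all finite c if and only if α > 1. -/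
open MeasureTheory Real Set Filter Topology

noncomputable def Gd (x : ℝ) : ℝ := (Real.sqrt (2 * π))⁻¹ * Real.exp (-x ^ 2 / 2)

lemma Gd_nonneg (x : ℝ) : 0 ≤ Gd x :=
  mul_nonneg (inv_nonneg.2 (Real.sqrt_nonneg _)) (Real.exp_pos _).le

lemma Gd_integrable : Integrable Gd := by
  have h : Integrable fun x : ℝ => (Real.sqrt (2 * π))⁻¹ * Real.exp (-(1/2 : ℝ) * x ^ 2) :=
    (integrable_exp_neg_mul_sq (by norm_num)).const_mul _
  exact h.congr (Filter.Eventually.of_forall fun x => by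
    show (Real.sqrt (2 * π))⁻¹ * Real.exp (-(1/2 : ℝ) * x ^ 2) = _
    unfold Gd; rw [show -(1/2 : ℝ) * x ^ 2 = -x ^ 2 / 2 by ring])

lemma Gd_integral : ∫ x, Gd x = 1 := by
  have h : ∫ x : ℝ, Gd x = (Real.sqrt (2 * π))⁻¹ * ∫ x : ℝ, Real.exp (-(1/2 : ℝ) * x ^ 2) := by
    rw [← integral_const_mul]
    exact integral_congr_ae (Filter.Eventually.of_forall fun x => by
      show Gd x = (Real.sqrt (2 * π))⁻¹ * Real.exp (-(1/2 : ℝ) * x ^ 2)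
      unfold Gd; rw [show -(1/2 : ℝ) * x ^ 2 = -x ^ 2 / 2 by ring])
  rw [h, integral_gaussian, show π / (1/2 : ℝ) = 2 * π by ring]
  exact inv_mul_cancel₀ (by positivity)

lemma hasDerivAt_negexp (s : ℝ) :
    HasDerivAt (fun s : ℝ => -Real.exp (-s ^ 2 / 2)) (s * Real.exp (-s ^ 2 / 2)) s := by
  have h : HasDerivAt (fun s : ℝ => -s ^ 2 / 2) (-s) s := by
    have := ((hasDerivAt_pow 2 s).neg.div_const 2)
    exact this.congr_deriv (by push_cast; ring)
  have h2 := h.exp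
  exact h2.neg.congr_deriv (by ring)

lemma tendsto_negexp : Tendsto (fun s : ℝ => -Real.exp (-s ^ 2 / 2)) atTop (𝓝 0) := by
  have h1 : Tendsto (fun s : ℝ => -s ^ 2 / 2) atTop atBot := by
    apply Tendsto.atBot_div_const (by norm_num : (0:ℝ) < 2)
    exact tendsto_neg_atBot_iff.mpr (tendsto_pow_atTop two_ne_zero)
  have := Real.tendsto_exp_atBot.comp h1
  simpa using this.neg

lemma integrableOn_mul_exp (u : ℝ) (hu : 0 ≤ u) :
    IntegrableOn (fun s => s * Real.exp (-s ^ 2 / 2)) (Ioi u) :=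
  integrableOn_Ioi_deriv_of_nonneg' (fun x _ => hasDerivAt_negexp x)
    (fun x hx => mul_nonneg (hu.trans hx.le) (Real.exp_pos _).le) tendsto_negexp

lemma integral_Ioi_mul_exp (u : ℝ) (hu : 0 ≤ u) :
    ∫ s in Ioi u, s * Real.exp (-s ^ 2 / 2) = Real.exp (-u ^ 2 / 2) := by
  have := integral_Ioi_of_hasDerivAt_of_nonneg' (a := u)
    (g := fun s : ℝ => -Real.exp (-s ^ 2 / 2)) (g' := fun s => s * Real.exp (-s ^ 2 / 2))
    (l := 0) (fun x _ => hasDerivAt_negexp x)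
    (fun x hx => mul_nonneg (hu.trans (le_of_lt hx)) (Real.exp_pos _).le) tendsto_negexp
  simpa using this

lemma Gd_tail_upper (u : ℝ) (hu : 1 ≤ u) :
    ∫ s in Ioi u, Gd s ≤ (Real.sqrt (2 * π))⁻¹ * Real.exp (-u ^ 2 / 2) := by
  have h1 : ∫ s in Ioi u, Gd s
      ≤ ∫ s in Ioi u, (Real.sqrt (2 * π))⁻¹ * (s * Real.exp (-s ^ 2 / 2)) := by
    apply setIntegral_mono_on Gd_integrable.integrableOn
      ((integrableOn_mul_exp u (by linarith)).const_mul _) measurableSet_Ioi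
    intro s hs
    have h1s : 1 ≤ s := hu.trans (le_of_lt hs)
    unfold Gd
    have : Real.exp (-s ^ 2 / 2) ≤ s * Real.exp (-s ^ 2 / 2) :=
      le_mul_of_one_le_left (Real.exp_pos _).le h1s
    exact mul_le_mul_of_nonneg_left this (inv_nonneg.2 (Real.sqrt_nonneg _))
  rw [integral_const_mul, integral_Ioi_mul_exp u (by linarith)] at h1
  exact h1

lemma Gd_tail_lower (u : ℝ) (hu : 1 ≤ u) :
    (Real.sqrt (2 * π))⁻¹ * Real.exp (-(3:ℝ)/2) * Real.exp (-u ^ 2 / 2) * u⁻¹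
      ≤ ∫ s in Ioi u, Gd s := by
  have hu0 : 0 < u := by linarith
  have hsub : Ioc u (u + u⁻¹) ⊆ Ioi u := Ioc_subset_Ioi_self
  have h1 : ∫ s in Ioc u (u + u⁻¹), Gd s ≤ ∫ s in Ioi u, Gd s := by
    apply setIntegral_mono_set Gd_integrable.integrableOn
      (Filter.Eventually.of_forall Gd_nonneg) (HasSubset.Subset.eventuallyLE hsub)
  refine le_trans ?_ h1
  have hμ : (volume (Ioc u (u + u⁻¹))).toReal = u⁻¹ := by
    rw [Real.volume_Ioc, show u + u⁻¹ - u = u⁻¹ by ring,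
      ENNReal.toReal_ofReal (by positivity : (0:ℝ) ≤ u⁻¹)]
  have hconst : ∀ s ∈ Ioc u (u + u⁻¹),
      (Real.sqrt (2 * π))⁻¹ * Real.exp (-(u + u⁻¹) ^ 2 / 2) ≤ Gd s := by
    intro s hs
    unfold Gd
    apply mul_le_mul_of_nonneg_left _ (inv_nonneg.2 (Real.sqrt_nonneg _))
    apply Real.exp_le_exp.2
    have h1 : 0 < s := lt_trans hu0 hs.1
    have h2 : s ≤ u + u⁻¹ := hs.2
    nlinarith
  have h2 := setIntegral_ge_of_const_le measurableSet_Ioc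
    (by rw [← lt_top_iff_ne_top]; exact measure_Ioc_lt_top) hconst Gd_integrable.integrableOn
  rw [measureReal_def, hμ, smul_eq_mul, mul_comm] at h2
  refine le_trans ?_ h2
  apply mul_le_mul_of_nonneg_right _ (by positivity)
  rw [mul_assoc, ← Real.exp_add]
  apply mul_le_mul_of_nonneg_left _ (inv_nonneg.2 (Real.sqrt_nonneg _))
  apply Real.exp_le_exp.2
  have hinv : u⁻¹ ≤ 1 := by
    rw [inv_le_one_iff₀]; right; exact hu
  have hinv0 : 0 < u⁻¹ := by positivity
  nlinarith [sq_nonneg u⁻¹, mul_inv_cancel₀ hu0.ne']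

lemma Gd_Iic_eq (t : ℝ) : ∫ s in Iic t, Gd s = ∫ s in Ioi (-t), Gd s := by
  have h := integral_comp_neg_Ioi (-t) Gd
  rw [neg_neg] at h
  rw [← h]
  refine setIntegral_congr_fun measurableSet_Ioi fun x _ => ?_
  unfold Gd; norm_num

lemma sqrt2pi_one_le : (1:ℝ) ≤ Real.sqrt (2 * π) := by
  rw [Real.one_le_sqrt]
  nlinarith [Real.pi_gt_three]

theorem stmt3 (α : ℝ) (hα : 0 < α) (ρ Φ ψ : ℝ → ℝ)
    (hρ : ∀ x, ρ x = (Real.sqrt (2 * π))⁻¹ * Real.exp (-x ^ 2 / 2))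
    (hΦ : ∀ x, Φ x = ∫ t in Iic x, ρ t)
    (hψ : ∀ x, ψ x = Real.exp (-x ^ 2 / (2 * α))) :
    (∀ c : ℝ, IntegrableOn (fun t => Φ t / ψ t) (Iic c) ∧
        IntegrableOn (fun t => (1 - Φ t) / ψ t) (Ici c)) ↔ 1 < α := by
  have hρG : ρ = Gd := funext fun x => by rw [hρ]; rfl
  have hΦG : ∀ t, Φ t = ∫ s in Iic t, Gd s := fun t => by rw [hΦ, hρG]
  have hΦmono : Monotone Φ := by
    intro a b hab
    rw [hΦG, hΦG]
    exact setIntegral_mono_set Gd_integrable.integrableOn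
      (Filter.Eventually.of_forall Gd_nonneg)
      (HasSubset.Subset.eventuallyLE (Iic_subset_Iic.2 hab))
  have hΦmeas : Measurable Φ := hΦmono.measurable
  have hψc : Continuous ψ := by
    have h : ψ = fun x => Real.exp (-x ^ 2 / (2 * α)) := funext hψ
    rw [h]; fun_prop
  have hψpos : ∀ x, 0 < ψ x := fun x => by rw [hψ]; exact Real.exp_pos _
  have hΦ0 : ∀ t, 0 ≤ Φ t := fun t => by
    rw [hΦG]; exact setIntegral_nonneg measurableSet_Iic fun s _ => Gd_nonneg s
  have hΦle1 : ∀ t, Φ t ≤ 1 := fun t => by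
    rw [hΦG, ← Gd_integral]
    exact setIntegral_le_integral Gd_integrable (Filter.Eventually.of_forall Gd_nonneg)
  have hΦtail : ∀ t, 1 - Φ t = ∫ s in Ioi t, Gd s := fun t => by
    rw [hΦG, sub_eq_iff_eq_add, ← Gd_integral]
    rw [← intervalIntegral.integral_Iic_add_Ioi Gd_integrable.integrableOn Gd_integrable.integrableOn]
    ring
  constructor
  · -- forward: integrability implies 1 < α
    intro H
    by_contra hcon
    push_neg at hcon
    set K := (Real.sqrt (2 * π))⁻¹ * Real.exp (-(3:ℝ)/2) with hK
    have hKpos : 0 < K := by positivity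
    have key : ∀ t : ℝ, t ∈ Ioi (1:ℝ) → K * t⁻¹ ≤ (1 - Φ t) / ψ t := by
      intro t ht
      have ht1 : (1:ℝ) ≤ t := le_of_lt ht
      have hnum : K * Real.exp (-t ^ 2 / 2) * t⁻¹ ≤ 1 - Φ t := by
        rw [hΦtail, hK]
        exact Gd_tail_lower t ht1
      have hden : ψ t ≤ Real.exp (-t ^ 2 / 2) := by
        rw [hψ]
        apply Real.exp_le_exp.2
        rw [div_le_div_iff₀ (by linarith) (by norm_num)]
        nlinarith [sq_nonneg t]
      have hcalc : K * t⁻¹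
          = (K * Real.exp (-t ^ 2 / 2) * t⁻¹) / Real.exp (-t ^ 2 / 2) := by
        field_simp
      rw [hcalc]
      exact div_le_div₀ (by linarith [hΦle1 t]) hnum (hψpos t) hden
    have h3 : IntegrableOn (fun t => (1 - Φ t) / ψ t) (Ioi (1:ℝ)) :=
      (H 1).2.mono_set Ioi_subset_Ici_self
    have h4 : IntegrableOn (fun t : ℝ => K * t⁻¹) (Ioi (1:ℝ)) := by
      apply Integrable.mono' h3
        ((measurable_const.mul measurable_inv).aestronglyMeasurable)
      filter_upwards [ae_restrict_mem measurableSet_Ioi] with t ht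
      have ht0 : (0:ℝ) < t := lt_trans one_pos ht
      change ‖K * t⁻¹‖ ≤ _
      rw [Real.norm_eq_abs, abs_of_nonneg (mul_pos hKpos (inv_pos.2 ht0)).le]
      exact key t ht
    have h5 : IntegrableOn (fun t : ℝ => t⁻¹) (Ioi (1:ℝ)) := by
      have h6 := h4.const_mul K⁻¹
      refine h6.congr (Filter.Eventually.of_forall fun t => ?_)
      field_simp
    have h7 : IntegrableOn (fun t : ℝ => t ^ (-1:ℝ)) (Ioi (1:ℝ)) := by
      refine h5.congr_fun (fun x _ => (Real.rpow_neg_one x).symm) measurableSet_Ioi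
    rw [integrableOn_Ioi_rpow_iff zero_lt_one] at h7
    norm_num at h7
  · -- reverse
    intro hα1 c
    have hc2 : 0 < (1 - α⁻¹) / 2 := by
      have : α⁻¹ < 1 := inv_lt_one_of_one_lt₀ hα1
      linarith
    have hE : Integrable (fun t : ℝ => Real.exp (-((1 - α⁻¹)/2) * t ^ 2)) :=
      integrable_exp_neg_mul_sq hc2
    have hbound : ∀ t : ℝ, Real.exp (-t ^ 2 / 2) / ψ t
        = Real.exp (-((1 - α⁻¹)/2) * t ^ 2) := by
      intro t
      rw [hψ, ← Real.exp_sub]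
      congr 1
      field_simp
      ring
    have hIcc : ∀ (F : ℝ → ℝ), Measurable F → (∀ t, |F t| ≤ 1) → ∀ a b : ℝ,
        IntegrableOn (fun t => F t / ψ t) (Icc a b) := by
      intro F hFm hF1 a b
      apply Measure.integrableOn_of_bounded
        (M := Real.exp (max (a ^ 2) (b ^ 2) / (2 * α))) measure_Icc_lt_top.ne
        ((hFm.div hψc.measurable).aestronglyMeasurable)
      filter_upwards [ae_restrict_mem measurableSet_Icc] with t ht
      have h2 : t ^ 2 ≤ max (a ^ 2) (b ^ 2) := by
        rcases le_or_gt t 0 with h | h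
        · exact le_max_of_le_left (by nlinarith [ht.1, ht.2])
        · exact le_max_of_le_right (by nlinarith [ht.1, ht.2])
      calc ‖F t / ψ t‖ = |F t| / ψ t := by
            rw [Real.norm_eq_abs, abs_div, abs_of_pos (hψpos t)]
        _ ≤ 1 / ψ t := by
            exact div_le_div_of_nonneg_right (hF1 t) (hψpos t).le
        _ = Real.exp (t ^ 2 / (2 * α)) := by
            rw [hψ, one_div, ← Real.exp_neg]; congr 1; ring
        _ ≤ Real.exp (max (a ^ 2) (b ^ 2) / (2 * α)) := by
            apply Real.exp_le_exp.2
            exact (div_le_div_iff_of_pos_right (by linarith)).2 h2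
    have hsqrtinv : (Real.sqrt (2 * π))⁻¹ ≤ 1 := inv_le_one_of_one_le₀ sqrt2pi_one_le
    constructor
    · -- Iic side
      set m := min c (-1) with hm
      have hm1 : m ≤ -1 := min_le_right _ _
      have htail : IntegrableOn (fun t => Φ t / ψ t) (Iic m) := by
        apply Integrable.mono' hE.integrableOn
          ((hΦmeas.div hψc.measurable).aestronglyMeasurable.restrict)
        filter_upwards [ae_restrict_mem measurableSet_Iic] with t ht
        have ht1 : t ≤ -1 := le_trans ht hm1
        have hnn : 0 ≤ Φ t / ψ t := div_nonneg (hΦ0 t) (hψpos t).le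
        change ‖Φ t / ψ t‖ ≤ _
        rw [Real.norm_eq_abs, abs_of_nonneg hnn, ← hbound t]
        refine (div_le_div_iff_of_pos_right (hψpos t)).2 ?_
        rw [hΦG, Gd_Iic_eq]
        calc ∫ s in Ioi (-t), Gd s
            ≤ (Real.sqrt (2 * π))⁻¹ * Real.exp (-(-t) ^ 2 / 2) :=
              Gd_tail_upper (-t) (by linarith)
          _ ≤ 1 * Real.exp (-(-t) ^ 2 / 2) :=
              mul_le_mul_of_nonneg_right hsqrtinv (Real.exp_pos _).le
          _ = Real.exp (-t ^ 2 / 2) := by rw [one_mul, neg_sq]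
      have hmid : IntegrableOn (fun t => Φ t / ψ t) (Icc m c) :=
        hIcc Φ hΦmeas (fun t => abs_le.2 ⟨by linarith [hΦ0 t], hΦle1 t⟩) m c
      have := htail.union hmid
      rwa [Iic_union_Icc_eq_Iic (min_le_left c (-1))] at this
    · -- Ici side
      set M := max c 1 with hMdef
      have hM1 : (1:ℝ) ≤ M := le_max_right _ _
      have htail : IntegrableOn (fun t => (1 - Φ t) / ψ t) (Ici M) := by
        apply Integrable.mono' hE.integrableOn
          (((measurable_const.sub hΦmeas).div hψc.measurable).aestronglyMeasurable.restrict)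
        filter_upwards [ae_restrict_mem measurableSet_Ici] with t ht
        have ht1 : (1:ℝ) ≤ t := le_trans hM1 ht
        have hnn : 0 ≤ (1 - Φ t) / ψ t :=
          div_nonneg (by linarith [hΦle1 t]) (hψpos t).le
        change ‖(1 - Φ t) / ψ t‖ ≤ _
        rw [Real.norm_eq_abs, abs_of_nonneg hnn, ← hbound t]
        refine (div_le_div_iff_of_pos_right (hψpos t)).2 ?_
        rw [hΦtail]
        calc ∫ s in Ioi t, Gd s
            ≤ (Real.sqrt (2 * π))⁻¹ * Real.exp (-t ^ 2 / 2) := Gd_tail_upper t ht1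
          _ ≤ 1 * Real.exp (-t ^ 2 / 2) :=
              mul_le_mul_of_nonneg_right hsqrtinv (Real.exp_pos _).le
          _ = Real.exp (-t ^ 2 / 2) := one_mul _
      have hmid : IntegrableOn (fun t => (1 - Φ t) / ψ t) (Icc c M) :=
        hIcc (fun t => 1 - Φ t) (measurable_const.sub hΦmeas)
          (fun t => by
            have h1 := hΦ0 t; have h2 := hΦle1 t
            simp only [abs_le]; constructor <;> linarith) c M
      have := hmid.union htail
      rwa [Icc_union_Ici_eq_Ici (le_max_left c 1)] at this
end

section
/- Let ρ be a strictly positive probability density on ℝ with CDF Φ, and ψ strictly positive, locally integrable with 1/ψ locally integrable, satisfying the weaker condition ∫_{-∞}^c (Φ(t))²/ψ(t) dt < ∞ and ∫_c^∞ (1-Φ(t))²/ψ(t) dt < ∞ for all finite c. If f : ℝ → ℝ is absolutely continuous on compact intervals with ∫|f| ρ < ∞ and ∫ |f'|² ψ < ∞, then f(x) Φ(x) → 0 as x → -∞. -/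
open MeasureTheory Real Set Filter

lemma tail_aux {g : ℝ → ℝ} {c : ℝ} (hg : IntegrableOn g (Iic c)) :
    Tendsto (fun b => ∫ t in Iic b, g t) atBot (nhds 0) := by
  have h := MeasureTheory.intervalIntegral_tendsto_integral_Iic c hg tendsto_id
  have heq : ∀ᶠ b in atBot, (∫ t in Iic c, g t) - (∫ t in (b : ℝ)..c, g t)
      = ∫ t in Iic b, g t := by
    filter_upwards [eventually_le_atBot c] with b hb
    have hsplit : (∫ t in Iic c, g t) = (∫ t in Iic b, g t) + ∫ t in Ioc b c, g t := by
      rw [← Iic_union_Ioc_eq_Iic hb]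
      exact setIntegral_union (Iic_disjoint_Ioc le_rfl) measurableSet_Ioc
        (hg.mono_set (Iic_subset_Iic.2 hb)) (hg.mono_set Ioc_subset_Iic_self)
    rw [intervalIntegral.integral_of_le hb]
    linarith
  have h2 : Tendsto (fun b : ℝ => (∫ t in Iic c, g t) - ∫ t in (b : ℝ)..c, g t) atBot
      (nhds ((∫ t in Iic c, g t) - ∫ t in Iic c, g t)) := tendsto_const_nhds.sub h
  rw [sub_self] at h2
  exact h2.congr' heq

theorem stmt5 (ρ ψ Φ : ℝ → ℝ)
    (hρpos : ∀ x, 0 < ρ x) (hρint : Integrable ρ) (hρ1 : ∫ x, ρ x = 1)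
    (hψpos : ∀ x, 0 < ψ x)
    (hψloc : LocallyIntegrable ψ)
    (hψinvloc : LocallyIntegrable (fun x => 1 / ψ x))
    (hΦ : ∀ x, Φ x = ∫ t in Iic x, ρ t)
    (hweak : ∀ c : ℝ, IntegrableOn (fun t => Φ t ^ 2 / ψ t) (Iic c) ∧
        IntegrableOn (fun t => (1 - Φ t) ^ 2 / ψ t) (Ici c))
    (f f' : ℝ → ℝ)
    (hf'loc : LocallyIntegrable f')
    (hAC : ∀ a b : ℝ, f b - f a = ∫ t in a..b, f' t)
    (hfL1 : Integrable (fun x => |f x| * ρ x))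
    (hf'L2 : Integrable (fun x => f' x ^ 2 * ψ x)) :
    Tendsto (fun x => f x * Φ x) atBot (nhds 0) := by
  have hρnn : ∀ x, 0 ≤ ρ x := fun x => (hρpos x).le
  -- basic facts about Φ
  have hΦmono : Monotone Φ := by
    intro a b hab
    rw [hΦ a, hΦ b]
    exact setIntegral_mono_set hρint.integrableOn (ae_of_all _ hρnn)
      (HasSubset.Subset.eventuallyLE (Iic_subset_Iic.2 hab))
  have hΦnn : ∀ x, 0 ≤ Φ x := by
    intro x
    rw [hΦ x]
    exact setIntegral_nonneg measurableSet_Iic fun t _ => hρnn t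
  have hΦpos : ∀ x, 0 < Φ x := by
    intro x
    rw [hΦ x]
    rw [setIntegral_pos_iff_support_of_nonneg_ae (ae_of_all _ fun t => hρnn t)
      hρint.integrableOn]
    have : Function.support ρ = univ := by
      ext t; simp [Function.support, (hρpos t).ne']
    rw [this, univ_inter]
    simp [Real.volume_Iic]
  have hΦ1 : ∀ x, Φ x ≤ 1 := by
    intro x
    rw [hΦ x, ← hρ1]
    exact setIntegral_le_integral hρint (ae_of_all _ hρnn)
  have hΦ0 : Tendsto Φ atBot (nhds 0) :=
    (tail_aux (c := 0) hρint.integrableOn).congr fun b => (hΦ b).symm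
  -- the dominating function g
  set g : ℝ → ℝ := fun t => (Φ t ^ 2 / ψ t + f' t ^ 2 * ψ t) / 2 with hg_def
  have hgnn : ∀ t, 0 ≤ g t := by
    intro t
    have h1 : 0 ≤ Φ t ^ 2 / ψ t := div_nonneg (sq_nonneg _) (hψpos t).le
    have h2 : 0 ≤ f' t ^ 2 * ψ t := mul_nonneg (sq_nonneg _) (hψpos t).le
    simp only [hg_def]; linarith
  have hgON : ∀ c : ℝ, IntegrableOn g (Iic c) := by
    intro c
    exact ((hweak c).1.add hf'L2.integrableOn).div_const 2
  have hgtail : Tendsto (fun b => ∫ t in Iic b, g t) atBot (nhds 0) :=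
    tail_aux (hgON 0)
  have hftail : Tendsto (fun b => ∫ t in Iic b, |f t| * ρ t) atBot (nhds 0) :=
    tail_aux (c := 0) hfL1.integrableOn
  -- AM-GM pointwise bound
  have key : ∀ t, Φ t * |f' t| ≤ g t := by
    intro t
    have hψt := hψpos t
    have hs : 0 < Real.sqrt (ψ t) := Real.sqrt_pos.2 hψt
    have h2 := two_mul_le_add_sq (Φ t / Real.sqrt (ψ t)) (|f' t| * Real.sqrt (ψ t))
    have e1 : (Φ t / Real.sqrt (ψ t)) ^ 2 = Φ t ^ 2 / ψ t := by
      rw [div_pow, Real.sq_sqrt hψt.le]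
    have e2 : (|f' t| * Real.sqrt (ψ t)) ^ 2 = f' t ^ 2 * ψ t := by
      rw [mul_pow, sq_abs, Real.sq_sqrt hψt.le]
    have e3 : Φ t / Real.sqrt (ψ t) * (|f' t| * Real.sqrt (ψ t)) = Φ t * |f' t| := by
      field_simp
    rw [e1, e2] at h2
    have h4 : 2 * (Φ t / Real.sqrt (ψ t)) * (|f' t| * Real.sqrt (ψ t))
        = 2 * (Φ t * |f' t|) := by rw [mul_assoc, e3]
    rw [h4] at h2
    simp only [hg_def]
    linarith
  -- Φ is measurable
  have hΦmeas : Measurable Φ := hΦmono.measurable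
  -- main bound
  have bound : ∀ x y : ℝ, x ≤ y →
      Φ x * |f x| ≤ Φ y * |f y| + ∫ t in Iic y, g t := by
    intro x y hxy
    have hf'int : IntervalIntegrable f' volume x y :=
      MeasureTheory.IntegrableOn.intervalIntegrable
        (hf'loc.integrableOn_isCompact isCompact_uIcc)
    have hfx : f x = f y - ∫ t in x..y, f' t := by
      have := hAC x y; linarith
    have habs : |f x| ≤ |f y| + |∫ t in x..y, f' t| := by
      rw [hfx]; exact (abs_sub _ _)
    have hIabs : |∫ t in x..y, f' t| ≤ ∫ t in x..y, |f' t| :=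
      intervalIntegral.abs_integral_le_integral_abs hxy
    -- integrability pieces on [x, y]
    have hint1 : IntervalIntegrable (fun t => Φ x * |f' t|) volume x y :=
      hf'int.abs.const_mul _
    have hΦf'ON : IntegrableOn (fun t => Φ t * |f' t|) (Icc x y) := by
      refine Integrable.bdd_mul (c := 1) ((hf'loc.integrableOn_isCompact isCompact_Icc).abs)
        (hΦmeas.aestronglyMeasurable) (ae_of_all _ fun t => ?_)
      rw [Real.norm_eq_abs, abs_of_nonneg (hΦnn t)]
      exact hΦ1 t
    have hint2 : IntervalIntegrable (fun t => Φ t * |f' t|) volume x y := by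
      apply MeasureTheory.IntegrableOn.intervalIntegrable
      rwa [uIcc_of_le hxy]
    have hint3 : IntervalIntegrable g volume x y := by
      apply MeasureTheory.IntegrableOn.intervalIntegrable
      rw [uIcc_of_le hxy]
      exact (hgON y).mono_set Icc_subset_Iic_self
    have step1 : Φ x * ∫ t in x..y, |f' t| = ∫ t in x..y, Φ x * |f' t| :=
      (intervalIntegral.integral_const_mul _ _).symm
    have step2 : (∫ t in x..y, Φ x * |f' t|) ≤ ∫ t in x..y, Φ t * |f' t| := by
      apply intervalIntegral.integral_mono_on hxy hint1 hint2
      intro t ht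
      exact mul_le_mul_of_nonneg_right (hΦmono ht.1) (abs_nonneg _)
    have step3 : (∫ t in x..y, Φ t * |f' t|) ≤ ∫ t in x..y, g t :=
      intervalIntegral.integral_mono_on hxy hint2 hint3 fun t _ => key t
    have step4 : (∫ t in x..y, g t) ≤ ∫ t in Iic y, g t := by
      rw [intervalIntegral.integral_of_le hxy]
      exact setIntegral_mono_set (hgON y) (ae_of_all _ fun t => hgnn t)
        (HasSubset.Subset.eventuallyLE Ioc_subset_Iic_self)
    have hΦx : 0 ≤ Φ x := hΦnn x
    calc Φ x * |f x| ≤ Φ x * (|f y| + |∫ t in x..y, f' t|) :=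
          mul_le_mul_of_nonneg_left habs hΦx
      _ = Φ x * |f y| + Φ x * |∫ t in x..y, f' t| := by ring
      _ ≤ Φ y * |f y| + Φ x * (∫ t in x..y, |f' t|) := by
          have a1 : Φ x * |f y| ≤ Φ y * |f y| :=
            mul_le_mul_of_nonneg_right (hΦmono hxy) (abs_nonneg _)
          have a2 : Φ x * |∫ t in x..y, f' t| ≤ Φ x * ∫ t in x..y, |f' t| :=
            mul_le_mul_of_nonneg_left hIabs hΦx
          linarith
      _ ≤ Φ y * |f y| + ∫ t in Iic y, g t := by
          rw [step1]
          linarith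
  -- splitting ∫ ρ over Ioc
  have eΦ : ∀ a c : ℝ, a ≤ c → ∫ t in Ioc a c, ρ t = Φ c - Φ a := by
    intro a c hac
    rw [hΦ c, hΦ a, ← Iic_union_Ioc_eq_Iic hac,
      setIntegral_union (Iic_disjoint_Ioc le_rfl) measurableSet_Ioc
        hρint.integrableOn hρint.integrableOn]
    ring
  -- averaging: find points where Φ * |f| is small
  have pick : ∀ ε : ℝ, 0 < ε → ∀ c : ℝ, (∫ t in Iic c, |f t| * ρ t) < ε / 4 →
      ∃ y ≤ c, Φ y * |f y| < ε / 2 := by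
    intro ε hε c hc
    by_contra hcon
    push_neg at hcon
    have hΦc := hΦpos c
    obtain ⟨a, haΦ, hac⟩ : ∃ a, Φ a < Φ c / 2 ∧ a ≤ c :=
      ((hΦ0.eventually_lt_const (by positivity : (0:ℝ) < Φ c / 2)).and
        (eventually_le_atBot c)).exists
    have hlow : ∀ t ∈ Ioc a c, ε / (2 * Φ c) * ρ t ≤ |f t| * ρ t := by
      intro t ht
      have h2 : ε / 2 ≤ Φ t * |f t| := hcon t ht.2
      have h3 : Φ t ≤ Φ c := hΦmono ht.2
      have h4 : 0 < Φ t := hΦpos t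
      have h5 : ε / (2 * Φ c) ≤ |f t| := by
        rw [div_le_iff₀ (by positivity)]
        nlinarith [abs_nonneg (f t)]
      exact mul_le_mul_of_nonneg_right h5 (hρnn t)
    have hint1 : (∫ t in Ioc a c, ε / (2 * Φ c) * ρ t) ≤ ∫ t in Ioc a c, |f t| * ρ t :=
      setIntegral_mono_on (hρint.integrableOn.const_mul _) hfL1.integrableOn
        measurableSet_Ioc hlow
    have e1 : (∫ t in Ioc a c, ε / (2 * Φ c) * ρ t) = ε / (2 * Φ c) * (Φ c - Φ a) := by
      rw [integral_const_mul, eΦ a c hac]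
    have hIoc_le : (∫ t in Ioc a c, |f t| * ρ t) ≤ ∫ t in Iic c, |f t| * ρ t :=
      setIntegral_mono_set hfL1.integrableOn
        (ae_of_all _ fun t => mul_nonneg (abs_nonneg _) (hρnn t))
        (HasSubset.Subset.eventuallyLE Ioc_subset_Iic_self)
    have h5 : ε / (2 * Φ c) * (Φ c / 2) = ε / 4 := by field_simp; ring
    have h6 : ε / 4 < ε / (2 * Φ c) * (Φ c - Φ a) := by
      rw [← h5]
      exact mul_lt_mul_of_pos_left (by linarith) (by positivity)
    linarith
  -- conclusion
  rw [NormedAddCommGroup.tendsto_nhds_zero]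
  intro ε hε
  have hev : ∀ᶠ c in (atBot : Filter ℝ),
      (∫ t in Iic c, |f t| * ρ t) < ε / 4 ∧ (∫ t in Iic c, g t) < ε / 2 :=
    (hftail.eventually_lt_const (by positivity : (0:ℝ) < ε / 4)).and
      (hgtail.eventually_lt_const (by positivity : (0:ℝ) < ε / 2))
  obtain ⟨c, hc1, hc2⟩ := hev.exists
  obtain ⟨y, hyc, hy⟩ := pick ε hε c hc1
  rw [eventually_atBot]
  refine ⟨y, fun x hx => ?_⟩
  have hb := bound x y hx
  have hHy : (∫ t in Iic y, g t) ≤ ∫ t in Iic c, g t :=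
    setIntegral_mono_set (hgON c) (ae_of_all _ fun t => hgnn t)
      (HasSubset.Subset.eventuallyLE (Iic_subset_Iic.2 hyc))
  rw [Real.norm_eq_abs, abs_mul, abs_of_nonneg (hΦnn x)]
  calc |f x| * Φ x = Φ x * |f x| := by ring
    _ ≤ Φ y * |f y| + ∫ t in Iic y, g t := hb
    _ < ε / 2 + ε / 2 := by linarith
    _ = ε := by ring
end

section
/- Under the same hypotheses (weaker condition on (ρ,ψ); f ∈ L¹_ρ absolutely continuous with f' ∈ L²_ψ), f(x)(1 - Φ(x)) → 0 as x → +∞. -/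
open MeasureTheory Real Set Filter
open scoped ENNReal NNReal

lemma tail_tendsto_zero {h : ℝ → ℝ} (hint : IntegrableOn h (Ioi (0:ℝ))) :
    Tendsto (fun x => ∫ t in Ioi x, h t) atTop (nhds 0) := by
  have A := MeasureTheory.intervalIntegral_tendsto_integral_Ioi (μ := volume) 0 hint tendsto_id
  have B : Tendsto (fun x : ℝ => (∫ t in Ioi (0:ℝ), h t) - ∫ t in (0:ℝ)..x, h t) atTop
      (nhds ((∫ t in Ioi (0:ℝ), h t) - ∫ t in Ioi (0:ℝ), h t)) := tendsto_const_nhds.sub A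
  rw [sub_self] at B
  refine B.congr' ?_
  filter_upwards [eventually_ge_atTop (0:ℝ)] with x hx
  rw [intervalIntegral.integral_of_le hx]
  have hsplit : ∫ t in Ioi (0:ℝ), h t = (∫ t in Ioc 0 x, h t) + ∫ t in Ioi x, h t := by
    rw [← setIntegral_union (Ioc_disjoint_Ioi le_rfl) measurableSet_Ioi
      (hint.mono_set Ioc_subset_Ioi_self) (hint.mono_set (Ioi_subset_Ioi hx)),
      Ioc_union_Ioi_eq_Ioi hx]
  rw [hsplit]; ring

lemma amgm_aux (a g p : ℝ) (hp : 0 < p) : a * g ≤ (a ^ 2 * p + g ^ 2 / p) / 2 := by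
  have h1 : a * g ≤ (a ^ 2 * p ^ 2 + g ^ 2) / (2 * p) := by
    rw [le_div_iff₀ (by positivity)]
    nlinarith [sq_nonneg (a * p - g)]
  calc a * g ≤ (a ^ 2 * p ^ 2 + g ^ 2) / (2 * p) := h1
    _ = (a ^ 2 * p + g ^ 2 / p) / 2 := by field_simp

theorem stmt6 (ρ ψ Φ : ℝ → ℝ)
    (hρpos : ∀ x, 0 < ρ x) (hρint : Integrable ρ) (hρ1 : ∫ x, ρ x = 1)
    (hψpos : ∀ x, 0 < ψ x)
    (hψloc : LocallyIntegrable ψ)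
    (hψinvloc : LocallyIntegrable (fun x => 1 / ψ x))
    (hΦ : ∀ x, Φ x = ∫ t in Iic x, ρ t)
    (hweak : ∀ c : ℝ, IntegrableOn (fun t => Φ t ^ 2 / ψ t) (Iic c) ∧
        IntegrableOn (fun t => (1 - Φ t) ^ 2 / ψ t) (Ici c))
    (f f' : ℝ → ℝ)
    (hf'loc : LocallyIntegrable f')
    (hAC : ∀ a b : ℝ, f b - f a = ∫ t in a..b, f' t)
    (hfL1 : Integrable (fun x => |f x| * ρ x))
    (hf'L2 : Integrable (fun x => f' x ^ 2 * ψ x)) :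
    Tendsto (fun x => f x * (1 - Φ x)) atTop (nhds 0) := by
  set G : ℝ → ℝ := fun s => ∫ t in Ioi s, ρ t with hGdef
  have hρm := hρint.aestronglyMeasurable
  have hf'm := hf'loc.aestronglyMeasurable
  have hρnn : ∀ x, 0 ≤ ρ x := fun x => (hρpos x).le
  have hG : ∀ s, 1 - Φ s = G s := by
    intro s
    have h := integral_add_compl (μ := volume) (measurableSet_Iic (a := s)) hρint
    rw [compl_Iic] at h
    rw [hΦ s, hGdef]
    simp only [hρ1] at h
    linarith
  have hGnn : ∀ s, 0 ≤ G s := fun s =>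
    setIntegral_nonneg measurableSet_Ioi (fun t _ => hρnn t)
  have hf'int : ∀ a b : ℝ, IntervalIntegrable f' volume a b := fun a b =>
    intervalIntegrable_iff.2
      ((hf'loc.integrableOn_isCompact isCompact_uIcc).mono_set Ioc_subset_Icc_self)
  have hfc : Continuous f := by
    have hfx : f = fun x => f 0 + ∫ t in (0:ℝ)..x, f' t := by
      funext x; have := hAC 0 x; linarith
    rw [hfx]
    exact continuous_const.add (intervalIntegral.continuous_primitive hf'int 0)
  have hfρ : Integrable (fun t => f t * ρ t) := by
    refine hfL1.mono' (hfc.aestronglyMeasurable.mul hρm) ?_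
    filter_upwards with t
    rw [Real.norm_eq_abs, abs_mul, abs_of_nonneg (hρnn t)]
  have hGψ : ∀ c : ℝ, IntegrableOn (fun t => G t ^ 2 / ψ t) (Ici c) := by
    intro c
    have h := (hweak c).2
    have he : (fun t => (1 - Φ t) ^ 2 / ψ t) = fun t => G t ^ 2 / ψ t := by
      funext t; rw [hG t]
    rwa [he] at h
  -- the key estimate
  have key : ∀ x : ℝ, |f x * G x - ∫ t in Ioi x, f t * ρ t| ≤
      ((∫ t in Ioi x, f' t ^ 2 * ψ t) + ∫ t in Ioi x, G t ^ 2 / ψ t) / 2 := by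
    intro x
    set B : ℝ := ((∫ t in Ioi x, f' t ^ 2 * ψ t) + ∫ t in Ioi x, G t ^ 2 / ψ t) / 2 with hBdef
    have hBint : IntegrableOn (fun s => (f' s ^ 2 * ψ s + G s ^ 2 / ψ s) / 2) (Ioi x) :=
      (hf'L2.integrableOn.add ((hGψ x).mono_set Ioi_subset_Ici_self)).div_const 2
    have hBnnpt : ∀ s, 0 ≤ (f' s ^ 2 * ψ s + G s ^ 2 / ψ s) / 2 := by
      intro s
      have := hψpos s
      positivity
    have hBnn : 0 ≤ B := by
      rw [hBdef, ← integral_add hf'L2.integrableOn ((hGψ x).mono_set Ioi_subset_Ici_self)]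
      apply div_nonneg _ (by norm_num)
      exact setIntegral_nonneg measurableSet_Ioi fun s _ => by
        have := hψpos s; positivity
    have h1 : f x * G x = ∫ t in Ioi x, f x * ρ t := (integral_const_mul _ _).symm
    have hconst : IntegrableOn (fun t => f x * ρ t) (Ioi x) :=
      (hρint.const_mul (f x)).integrableOn
    have h2 : f x * G x - ∫ t in Ioi x, f t * ρ t = ∫ t in Ioi x, (f x - f t) * ρ t := by
      rw [h1, ← integral_sub hconst hfρ.integrableOn]
      congr 1; funext t; ring
    rw [h2]
    have h3 : |∫ t in Ioi x, (f x - f t) * ρ t| ≤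
        (∫⁻ t in Ioi x, ENNReal.ofReal ‖(f x - f t) * ρ t‖).toReal := by
      rw [← Real.norm_eq_abs]
      exact norm_integral_le_lintegral_norm _
    set J : ℝ≥0∞ := ∫⁻ t in Ioi x,
        (∫⁻ s in Ioc x t, ENNReal.ofReal |f' s|) * ENNReal.ofReal (ρ t) with hJdef
    set K : ℝ≥0∞ := ∫⁻ s in Ioi x, ENNReal.ofReal (|f' s| * G s) with hKdef
    have h4a : (∫⁻ t in Ioi x, ENNReal.ofReal ‖(f x - f t) * ρ t‖) ≤ J := by
      refine lintegral_mono_ae ?_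
      rw [ae_restrict_iff' measurableSet_Ioi]
      filter_upwards with t ht
      have hxt : x ≤ t := le_of_lt ht
      have habs : |f x - f t| ≤ ∫ s in Ioc x t, |f' s| := by
        have h5 : f t - f x = ∫ s in x..t, f' s := hAC x t
        have h6 : |f x - f t| = |∫ s in x..t, f' s| := by rw [abs_sub_comm, h5]
        rw [h6]
        calc |∫ s in x..t, f' s| ≤ ∫ s in x..t, |f' s| :=
              intervalIntegral.abs_integral_le_integral_abs hxt
          _ = ∫ s in Ioc x t, |f' s| := intervalIntegral.integral_of_le hxt
      have hf'abs : IntegrableOn (fun s => |f' s|) (Ioc x t) :=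
        ((hf'loc.integrableOn_isCompact isCompact_Icc).mono_set Ioc_subset_Icc_self).abs
      have hnrm : ‖(f x - f t) * ρ t‖ ≤ (∫ s in Ioc x t, |f' s|) * ρ t := by
        rw [Real.norm_eq_abs, abs_mul, abs_of_nonneg (hρnn t)]
        exact mul_le_mul_of_nonneg_right habs (hρnn t)
      calc ENNReal.ofReal ‖(f x - f t) * ρ t‖
          ≤ ENNReal.ofReal ((∫ s in Ioc x t, |f' s|) * ρ t) := ENNReal.ofReal_le_ofReal hnrm
        _ = ENNReal.ofReal (∫ s in Ioc x t, |f' s|) * ENNReal.ofReal (ρ t) :=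
            ENNReal.ofReal_mul (setIntegral_nonneg measurableSet_Ioc fun s _ => abs_nonneg _)
        _ = (∫⁻ s in Ioc x t, ENNReal.ofReal |f' s|) * ENNReal.ofReal (ρ t) := by
            rw [ofReal_integral_eq_lintegral_ofReal hf'abs
              (ae_of_all _ fun s => abs_nonneg _)]
    -- Tonelli
    have h4b : J = K := by
      have hSmeas : MeasurableSet {p : ℝ × ℝ | x < p.2 ∧ p.2 ≤ p.1} := by
        apply MeasurableSet.inter
        · exact measurable_snd measurableSet_Ioi
        · exact measurableSet_le measurable_snd measurable_fst
      have hgm : AEMeasurable (fun p : ℝ × ℝ =>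
          ({p : ℝ × ℝ | x < p.2 ∧ p.2 ≤ p.1}).indicator
            (fun p => ENNReal.ofReal |f' p.2| * ENNReal.ofReal (ρ p.1)) p)
          (volume.prod volume) := by
        refine AEMeasurable.indicator ?_ hSmeas
        have h1 : AEMeasurable (fun p : ℝ × ℝ => ENNReal.ofReal |f' p.2|)
            (volume.prod volume) :=
          ENNReal.measurable_ofReal.comp_aemeasurable
            (measurable_abs.comp_aemeasurable (hf'm.comp_snd (μ := volume)).aemeasurable)
        have h2 : AEMeasurable (fun p : ℝ × ℝ => ENNReal.ofReal (ρ p.1))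
            (volume.prod volume) :=
          ENNReal.measurable_ofReal.comp_aemeasurable
            (hρm.comp_fst (ν := volume)).aemeasurable
        exact h1.mul h2
      have hJeq : J = ∫⁻ t, ∫⁻ s,
          ({p : ℝ × ℝ | x < p.2 ∧ p.2 ≤ p.1}).indicator
            (fun p => ENNReal.ofReal |f' p.2| * ENNReal.ofReal (ρ p.1)) (t, s) := by
        rw [hJdef, ← lintegral_indicator measurableSet_Ioi]
        refine lintegral_congr fun t => ?_
        by_cases ht : t ∈ Ioi x
        · rw [indicator_of_mem ht]
          rw [← lintegral_mul_const' _ _ ENNReal.ofReal_ne_top,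
            ← lintegral_indicator measurableSet_Ioc]
          refine lintegral_congr fun s => ?_
          by_cases hs : s ∈ Ioc x t
          · rw [indicator_of_mem hs, indicator_of_mem (show (t,s) ∈ {p : ℝ × ℝ | x < p.2 ∧ p.2 ≤ p.1} from ⟨hs.1, hs.2⟩)]
          · rw [indicator_of_notMem hs, indicator_of_notMem
              (show (t,s) ∉ {p : ℝ × ℝ | x < p.2 ∧ p.2 ≤ p.1} from
                fun hmem => hs ⟨hmem.1, hmem.2⟩)]
        · rw [indicator_of_notMem ht]
          symm
          rw [show (∫⁻ s, ({p : ℝ × ℝ | x < p.2 ∧ p.2 ≤ p.1}).indicator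
              (fun p => ENNReal.ofReal |f' p.2| * ENNReal.ofReal (ρ p.1)) (t, s))
              = ∫⁻ s : ℝ, (0:ℝ≥0∞)
            from lintegral_congr fun s => indicator_of_notMem
              (show (t,s) ∉ {p : ℝ × ℝ | x < p.2 ∧ p.2 ≤ p.1} from
                fun hmem => ht (lt_of_lt_of_le hmem.1 hmem.2)) _]
          simp
      have hKeq : K = ∫⁻ s, ∫⁻ t,
          ({p : ℝ × ℝ | x < p.2 ∧ p.2 ≤ p.1}).indicator
            (fun p => ENNReal.ofReal |f' p.2| * ENNReal.ofReal (ρ p.1)) (t, s) := by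
        rw [hKdef, ← lintegral_indicator measurableSet_Ioi]
        refine (lintegral_congr fun s => ?_)
        by_cases hs : s ∈ Ioi x
        · rw [indicator_of_mem hs]
          have hinner : ∀ t : ℝ, ({p : ℝ × ℝ | x < p.2 ∧ p.2 ≤ p.1}).indicator
              (fun p => ENNReal.ofReal |f' p.2| * ENNReal.ofReal (ρ p.1)) (t, s)
              = (Ici s).indicator (fun t => ENNReal.ofReal |f' s| * ENNReal.ofReal (ρ t)) t := by
            intro t
            by_cases hts : s ≤ t
            · rw [indicator_of_mem (show (t,s) ∈ {p : ℝ × ℝ | x < p.2 ∧ p.2 ≤ p.1} from ⟨hs, hts⟩), indicator_of_mem (show t ∈ Ici s from hts)]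
            · rw [indicator_of_notMem (show (t,s) ∉ {p : ℝ × ℝ | x < p.2 ∧ p.2 ≤ p.1} from fun hmem => hts hmem.2),
                indicator_of_notMem (show t ∉ Ici s from hts)]
          rw [show (∫⁻ t, ({p : ℝ × ℝ | x < p.2 ∧ p.2 ≤ p.1}).indicator
              (fun p => ENNReal.ofReal |f' p.2| * ENNReal.ofReal (ρ p.1)) (t, s))
              = ∫⁻ t, (Ici s).indicator
                (fun t => ENNReal.ofReal |f' s| * ENNReal.ofReal (ρ t)) t
            from lintegral_congr hinner]
          rw [lintegral_indicator measurableSet_Ici, lintegral_const_mul' _ _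
            ENNReal.ofReal_ne_top]
          rw [← ofReal_integral_eq_lintegral_ofReal
            (hρint.integrableOn) (ae_of_all _ fun t => hρnn t)]
          rw [integral_Ici_eq_integral_Ioi]
          rw [← ENNReal.ofReal_mul (abs_nonneg _)]
        · rw [indicator_of_notMem hs]
          rw [show (∫⁻ t, ({p : ℝ × ℝ | x < p.2 ∧ p.2 ≤ p.1}).indicator
              (fun p => ENNReal.ofReal |f' p.2| * ENNReal.ofReal (ρ p.1)) (t, s))
              = ∫⁻ t : ℝ, (0:ℝ≥0∞)
            from lintegral_congr fun t => indicator_of_notMem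
              (show (t,s) ∉ {p : ℝ × ℝ | x < p.2 ∧ p.2 ≤ p.1} from
                fun hmem => hs hmem.1) _]
          simp
      rw [hJeq, hKeq]
      exact lintegral_lintegral_swap hgm
    -- AM-GM bound
    have h5 : K ≤ ENNReal.ofReal B := by
      rw [hKdef]
      calc (∫⁻ s in Ioi x, ENNReal.ofReal (|f' s| * G s))
          ≤ ∫⁻ s in Ioi x, ENNReal.ofReal ((f' s ^ 2 * ψ s + G s ^ 2 / ψ s) / 2) := by
            refine lintegral_mono fun s => ENNReal.ofReal_le_ofReal ?_
            have h := amgm_aux |f' s| (G s) (ψ s) (hψpos s)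
            rwa [sq_abs] at h
        _ = ENNReal.ofReal (∫ s in Ioi x, (f' s ^ 2 * ψ s + G s ^ 2 / ψ s) / 2) :=
            (ofReal_integral_eq_lintegral_ofReal hBint
              (ae_of_all _ fun s => hBnnpt s)).symm
        _ = ENNReal.ofReal B := by
            rw [hBdef, integral_div, integral_add hf'L2.integrableOn
              ((hGψ x).mono_set Ioi_subset_Ici_self)]
    calc |∫ t in Ioi x, (f x - f t) * ρ t|
        ≤ (∫⁻ t in Ioi x, ENNReal.ofReal ‖(f x - f t) * ρ t‖).toReal := h3
      _ ≤ (ENNReal.ofReal B).toReal :=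
          ENNReal.toReal_mono ENNReal.ofReal_ne_top (le_trans h4a (h4b ▸ h5))
      _ = B := ENNReal.toReal_ofReal hBnn
  -- assemble
  have hT1 : Tendsto (fun x => ∫ t in Ioi x, f' t ^ 2 * ψ t) atTop (nhds 0) :=
    tail_tendsto_zero hf'L2.integrableOn
  have hT2 : Tendsto (fun x => ∫ t in Ioi x, G t ^ 2 / ψ t) atTop (nhds 0) :=
    tail_tendsto_zero ((hGψ 0).mono_set Ioi_subset_Ici_self)
  have hB0 : Tendsto (fun x => ((∫ t in Ioi x, f' t ^ 2 * ψ t)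
      + ∫ t in Ioi x, G t ^ 2 / ψ t) / 2) atTop (nhds 0) := by
    have := (hT1.add hT2).div_const 2
    simpa using this
  have hTail : Tendsto (fun x => ∫ t in Ioi x, f t * ρ t) atTop (nhds 0) :=
    tail_tendsto_zero hfρ.integrableOn
  have hmid : Tendsto (fun x => f x * G x - ∫ t in Ioi x, f t * ρ t) atTop (nhds 0) :=
    squeeze_zero_norm (fun x => by simpa [Real.norm_eq_abs] using key x) hB0
  have hfin : Tendsto (fun x => f x * G x) atTop (nhds 0) := by
    have := hmid.add hTail
    simpa using this
  have hfun : (fun x => f x * (1 - Φ x)) = fun x => f x * G x := by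
    funext x; rw [hG x]
  rw [hfun]
  exact hfin
end

section
/- Define η(x,y) = ∫_{-∞}^{min(x,y)} Φ(t)²/ψ(t) dt + ∫_{max(x,y)}^∞ (1-Φ(t))²/ψ(t) dt - ∫_{min(x,y)}^{max(x,y)} Φ(t)(1-Φ(t))/ψ(t) dt. Then for every y ∈ ℝ, ∫_{-∞}^∞ η(x,y) ρ(x) dx = 0, assuming the weaker condition holds. -/
open MeasureTheory Real Set

theorem stmt7 (ρ ψ Φ : ℝ → ℝ) (η : ℝ → ℝ → ℝ)
    (hρpos : ∀ x, 0 < ρ x) (hρint : Integrable ρ) (hρ1 : ∫ x, ρ x = 1)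
    (hψpos : ∀ x, 0 < ψ x)
    (hψloc : LocallyIntegrable ψ)
    (hψinvloc : LocallyIntegrable (fun x => 1 / ψ x))
    (hΦ : ∀ x, Φ x = ∫ t in Iic x, ρ t)
    (hweak : ∀ c : ℝ, IntegrableOn (fun t => Φ t ^ 2 / ψ t) (Iic c) ∧
        IntegrableOn (fun t => (1 - Φ t) ^ 2 / ψ t) (Ici c))
    (hη : ∀ x y : ℝ, η x y =
        (∫ t in Iic (min x y), Φ t ^ 2 / ψ t)
        + (∫ t in Ici (max x y), (1 - Φ t) ^ 2 / ψ t)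
        - ∫ t in (min x y)..(max x y), Φ t * (1 - Φ t) / ψ t) :
    ∀ y : ℝ, ∫ x, η x y * ρ x = 0 := by
  intro y
  have hρ0 : ∀ x, 0 ≤ ρ x := fun x => (hρpos x).le
  -- basic facts about Φ
  have hΦmono : Monotone Φ := by
    intro a b hab
    rw [hΦ a, hΦ b]
    exact setIntegral_mono_set hρint.integrableOn
      (Filter.Eventually.of_forall hρ0)
      (HasSubset.Subset.eventuallyLE (Iic_subset_Iic.mpr hab))
  have hΦmeas : Measurable Φ := hΦmono.measurable
  have hΦ0 : ∀ t, 0 ≤ Φ t := by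
    intro t; rw [hΦ]
    exact setIntegral_nonneg measurableSet_Iic (fun x _ => hρ0 x)
  have hΦle1 : ∀ t, Φ t ≤ 1 := by
    intro t; rw [hΦ, ← hρ1]
    exact setIntegral_le_integral hρint (Filter.Eventually.of_forall hρ0)
  have hΦIio : ∀ t, ∫ x in Iio t, ρ x = Φ t := by
    intro t; rw [hΦ, integral_Iic_eq_integral_Iio]
  have hΦIci : ∀ t, ∫ x in Ici t, ρ x = 1 - Φ t := by
    intro t
    have h1 := integral_add_compl (measurableSet_Iio (a := t)) hρint (f := ρ)
    rw [compl_Iio, hρ1, hΦIio] at h1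
    linarith
  -- the kernel h
  set h : ℝ → ℝ → ℝ := fun t x => Φ t - (Iio t).indicator (fun _ => (1:ℝ)) x with hh
  have h_of_le : ∀ {t x : ℝ}, t ≤ x → h t x = Φ t := by
    intro t x htx
    simp [hh, indicator, not_lt.mpr htx]
  have h_of_lt : ∀ {t x : ℝ}, x < t → h t x = Φ t - 1 := by
    intro t x htx
    simp [hh, indicator, htx]
  set c : ℝ → ℝ := fun t => h t y * (ψ t)⁻¹ with hc
  set f : ℝ → ℝ → ℝ := fun t x => c t * h t x * ρ x with hf
  have hψinv0 : ∀ t, 0 ≤ (ψ t)⁻¹ := fun t => (inv_pos.mpr (hψpos t)).le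
  have hψinvmeas : AEMeasurable (fun t => (ψ t)⁻¹) volume := by
    have := hψinvloc.aestronglyMeasurable.aemeasurable
    simpa [one_div] using this
  have hcy : ∀ t, h t y = Φ t - (Ioi y).indicator (fun _ => (1:ℝ)) t := by
    intro t
    simp only [hh, indicator, mem_Iio, mem_Ioi]
  have hcmeas : AEMeasurable c volume := by
    have h1 : Measurable (fun t => Φ t - (Ioi y).indicator (fun _ => (1:ℝ)) t) :=
      hΦmeas.sub (measurable_const.indicator measurableSet_Ioi)
    have h2 : c = fun t => (Φ t - (Ioi y).indicator (fun _ => (1:ℝ)) t) * (ψ t)⁻¹ := by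
      funext t; simp only [hc]; rw [hcy t]
    rw [h2]
    exact h1.aemeasurable.mul hψinvmeas
  -- inner integral is zero
  have hsplit : ∀ t, (fun x => h t x * ρ x) = fun x => Φ t * ρ x - (Iio t).indicator ρ x := by
    intro t
    funext x
    by_cases hx : x < t <;> simp [hh, indicator, hx] <;> ring
  have hmulint : ∀ t, Integrable (fun x => h t x * ρ x) := by
    intro t
    rw [hsplit t]
    exact (hρint.const_mul _).sub (hρint.indicator measurableSet_Iio)
  have hinner : ∀ t, ∫ x, h t x * ρ x = 0 := by
    intro t
    rw [hsplit t, integral_sub (hρint.const_mul _) (hρint.indicator measurableSet_Iio),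
      integral_const_mul, hρ1, integral_indicator measurableSet_Iio, hΦIio]
    ring
  -- absolute inner integral
  have habsint : ∀ t, ∫ x, |h t x| * ρ x = 2 * (Φ t * (1 - Φ t)) := by
    intro t
    have h1 : (fun x => |h t x| * ρ x)
        = fun x => (Iio t).indicator (fun x => (1 - Φ t) * ρ x) x
            + (Ici t).indicator (fun x => Φ t * ρ x) x := by
      funext x
      by_cases hx : x < t
      · rw [h_of_lt hx]
        have hx' : x ∉ Ici t := by simp [not_le.mpr hx]
        simp only [indicator, mem_Iio, hx, if_pos, hx', if_neg, mem_Ici, not_le.mpr hx,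
          if_false, add_zero, abs_of_nonpos (by linarith [hΦle1 t] : Φ t - 1 ≤ 0)]
        ring
      · rw [h_of_le (not_lt.mp hx)]
        simp only [indicator, mem_Iio, hx, if_false, mem_Ici, not_lt.mp hx, if_pos,
          zero_add, abs_of_nonneg (hΦ0 t)]
    rw [h1, integral_add ((hρint.const_mul _).indicator measurableSet_Iio)
      ((hρint.const_mul _).indicator measurableSet_Ici),
      integral_indicator measurableSet_Iio, integral_indicator measurableSet_Ici,
      integral_const_mul, integral_const_mul, hΦIio, hΦIci]
    ring
  -- joint measurability
  have hFaesm : AEStronglyMeasurable (Function.uncurry f) (volume.prod volume) := by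
    have h1 : AEMeasurable (fun p : ℝ × ℝ => c p.1) (volume.prod volume) :=
      AEMeasurable.comp_fst hcmeas
    have h2 : Measurable (fun p : ℝ × ℝ => h p.1 p.2) := by
      have hs : MeasurableSet {p : ℝ × ℝ | p.2 < p.1} :=
        measurableSet_lt measurable_snd measurable_fst
      have he : (fun p : ℝ × ℝ => h p.1 p.2)
          = fun p => Φ p.1 - {p : ℝ × ℝ | p.2 < p.1}.indicator (fun _ => (1:ℝ)) p := by
        funext p
        simp only [hh, indicator, mem_Iio, mem_setOf_eq]
      rw [he]
      exact (hΦmeas.comp measurable_fst).sub (measurable_const.indicator hs)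
    have h3 : AEMeasurable (fun p : ℝ × ℝ => ρ p.2) (volume.prod volume) :=
      AEMeasurable.comp_snd hρint.aemeasurable
    exact ((h1.mul h2.aemeasurable).mul h3).aestronglyMeasurable
  -- integrability of each slice
  have hslice : ∀ t, Integrable (fun x => f t x) := by
    intro t
    have he : (fun x => f t x) = fun x => c t * (h t x * ρ x) := by
      funext x; rw [hf]; ring
    rw [he]
    exact (hmulint t).const_mul _
  -- the norm integral function
  have hGnorm : (fun t => ∫ x, ‖f t x‖) = fun t => |c t| * (2 * (Φ t * (1 - Φ t))) := by
    funext t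
    have h1 : (fun x => ‖f t x‖) = fun x => |c t| * (|h t x| * ρ x) := by
      funext x
      rw [hf]
      simp only [Real.norm_eq_abs, abs_mul, abs_of_nonneg (hρ0 x)]
      ring
    rw [h1, integral_const_mul, habsint]
  have hG : Integrable (fun t => |c t| * (2 * (Φ t * (1 - Φ t)))) := by
    have hcabs : AEMeasurable (fun t => |c t|) volume := by
      simpa [Real.norm_eq_abs] using hcmeas.norm
    have hGaesm : AEStronglyMeasurable (fun t => |c t| * (2 * (Φ t * (1 - Φ t)))) volume :=
      (hcabs.mul (aemeasurable_const.mul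
        (hΦmeas.aemeasurable.mul (measurable_const.sub hΦmeas).aemeasurable))).aestronglyMeasurable
    have hIic : IntegrableOn (fun t => |c t| * (2 * (Φ t * (1 - Φ t)))) (Iic y) := by
      refine Integrable.mono ((hweak y).1.const_mul 2) hGaesm.restrict ?_
      refine (ae_restrict_mem measurableSet_Iic).mono (fun t ht => ?_)
      have hty : h t y = Φ t := h_of_le ht
      have h2 : |c t| = Φ t * (ψ t)⁻¹ := by
        rw [hc]
        simp only [hty]
        rw [abs_mul, abs_of_nonneg (hΦ0 t), abs_of_nonneg (hψinv0 t)]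
      simp only [Real.norm_eq_abs]
      rw [abs_of_nonneg (mul_nonneg (abs_nonneg _)
          (by nlinarith [hΦ0 t, hΦle1 t] : (0:ℝ) ≤ 2 * (Φ t * (1 - Φ t)))),
        h2, abs_of_nonneg (mul_nonneg (by norm_num)
          (div_nonneg (sq_nonneg _) (hψpos t).le) : (0:ℝ) ≤ 2 * (Φ t ^ 2 / ψ t)),
        div_eq_mul_inv]
      nlinarith [hΦ0 t, hΦle1 t, hψinv0 t,
        mul_nonneg (mul_nonneg (mul_nonneg (hΦ0 t) (hΦ0 t)) (hΦ0 t)) (hψinv0 t)]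
    have hIoi : IntegrableOn (fun t => |c t| * (2 * (Φ t * (1 - Φ t)))) (Ioi y) := by
      refine Integrable.mono (((hweak y).2.mono_set Ioi_subset_Ici_self).const_mul 2)
        hGaesm.restrict ?_
      refine (ae_restrict_mem measurableSet_Ioi).mono (fun t ht => ?_)
      have hty : h t y = Φ t - 1 := h_of_lt ht
      have h2 : |c t| = (1 - Φ t) * (ψ t)⁻¹ := by
        rw [hc]
        simp only [hty]
        rw [abs_mul, abs_of_nonpos (by linarith [hΦle1 t] : Φ t - 1 ≤ 0),
          abs_of_nonneg (hψinv0 t)]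
        ring
      simp only [Real.norm_eq_abs]
      rw [abs_of_nonneg (mul_nonneg (abs_nonneg _)
          (by nlinarith [hΦ0 t, hΦle1 t] : (0:ℝ) ≤ 2 * (Φ t * (1 - Φ t)))),
        h2, abs_of_nonneg (mul_nonneg (by norm_num)
          (div_nonneg (sq_nonneg _) (hψpos t).le) : (0:ℝ) ≤ 2 * ((1 - Φ t) ^ 2 / ψ t)),
        div_eq_mul_inv]
      nlinarith [hΦ0 t, hΦle1 t, hψinv0 t,
        mul_nonneg (mul_nonneg (mul_nonneg (by linarith [hΦle1 t] : (0:ℝ) ≤ 1 - Φ t)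
          (by linarith [hΦle1 t] : (0:ℝ) ≤ 1 - Φ t)) (by linarith [hΦle1 t] : (0:ℝ) ≤ 1 - Φ t))
          (hψinv0 t)]
    have hu := hIic.union hIoi
    rw [Iic_union_Ioi] at hu
    exact integrableOn_univ.mp hu
  -- product integrability
  have hFint : Integrable (Function.uncurry f) (volume.prod volume) := by
    rw [integrable_prod_iff hFaesm]
    refine ⟨ae_of_all _ hslice, ?_⟩
    have he : (fun t => ∫ x, ‖Function.uncurry f (t, x)‖) = fun t => ∫ x, ‖f t x‖ := rfl
    rw [he, hGnorm]
    exact hG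
  -- identification of η with the integral of the kernel
  have claim1 : ∀ x : ℝ, η x y = ∫ t, c t * h t x := by
    intro x
    set a := min x y with ha
    set b := max x y with hb
    have hab : a ≤ b := min_le_max
    have e1 : EqOn (fun t => c t * h t x) (fun t => Φ t ^ 2 / ψ t) (Iic a) := by
      intro t ht
      have htx : t ≤ x := le_trans ht (min_le_left x y)
      have hty : t ≤ y := le_trans ht (min_le_right x y)
      simp only [hc, h_of_le htx, h_of_le hty, div_eq_mul_inv]
      ring
    have e2 : EqOn (fun t => c t * h t x) (fun t => -(Φ t * (1 - Φ t) / ψ t)) (Ioc a b) := by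
      intro t ht
      obtain ⟨h1, h2⟩ := ht
      rcases le_total x y with hxy | hxy
      · have hax : x < t := by rwa [ha, min_eq_left hxy] at h1
        have hby : t ≤ y := by rwa [hb, max_eq_right hxy] at h2
        simp only [hc, h_of_lt hax, h_of_le hby, div_eq_mul_inv]
        ring
      · have hay : y < t := by rwa [ha, min_eq_right hxy] at h1
        have hbx : t ≤ x := by rwa [hb, max_eq_left hxy] at h2
        simp only [hc, h_of_lt hay, h_of_le hbx, div_eq_mul_inv]
        ring
    have e3 : EqOn (fun t => c t * h t x) (fun t => (1 - Φ t) ^ 2 / ψ t) (Ioi b) := by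
      intro t ht
      have htx : x < t := lt_of_le_of_lt (le_max_left x y) ht
      have hty : y < t := lt_of_le_of_lt (le_max_right x y) ht
      simp only [hc, h_of_lt htx, h_of_lt hty, div_eq_mul_inv]
      ring
    have I1 : IntegrableOn (fun t => c t * h t x) (Iic a) :=
      ((hweak a).1).congr_fun (fun t ht => (e1 ht).symm) measurableSet_Iic
    have I3 : IntegrableOn (fun t => c t * h t x) (Ioi b) :=
      (((hweak b).2).mono_set Ioi_subset_Ici_self).congr_fun
        (fun t ht => (e3 ht).symm) measurableSet_Ioi
    have I2 : IntegrableOn (fun t => c t * h t x) (Ioc a b) := by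
      have base : IntegrableOn (fun t => 1 / ψ t) (Icc a b) :=
        hψinvloc.integrableOn_isCompact isCompact_Icc
      have haesm : AEStronglyMeasurable (fun t => -(Φ t * (1 - Φ t) / ψ t)) volume := by
        have he : (fun t => -(Φ t * (1 - Φ t) / ψ t))
            = fun t => -(Φ t * (1 - Φ t) * (ψ t)⁻¹) := by
          funext t; rw [div_eq_mul_inv]
        rw [he]
        exact ((hΦmeas.aemeasurable.mul
          (measurable_const.sub hΦmeas).aemeasurable).mul hψinvmeas).neg.aestronglyMeasurable
      have Ibound : IntegrableOn (fun t => -(Φ t * (1 - Φ t) / ψ t)) (Ioc a b) := by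
        refine Integrable.mono (base.mono_set Ioc_subset_Icc_self) haesm.restrict ?_
        refine ae_of_all _ (fun t => ?_)
        simp only [Real.norm_eq_abs, abs_neg, one_div]
        rw [abs_of_nonneg (div_nonneg (mul_nonneg (hΦ0 t) (by linarith [hΦle1 t]))
            (hψpos t).le), abs_of_nonneg (hψinv0 t), div_eq_mul_inv]
        have h1 : Φ t * (1 - Φ t) ≤ 1 := by nlinarith [hΦ0 t, hΦle1 t]
        calc Φ t * (1 - Φ t) * (ψ t)⁻¹ ≤ 1 * (ψ t)⁻¹ :=
              mul_le_mul_of_nonneg_right h1 (hψinv0 t)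
          _ = (ψ t)⁻¹ := one_mul _
      exact Ibound.congr_fun (fun t ht => (e2 ht).symm) measurableSet_Ioc
    have hgint : Integrable (fun t => c t * h t x) volume := by
      rw [← integrableOn_univ, ← Iic_union_Ioi (a := b), ← Iic_union_Ioc_eq_Iic hab]
      exact (I1.union I2).union I3
    have split1 : ∫ t, c t * h t x
        = (∫ t in Iic b, c t * h t x) + ∫ t in Ioi b, c t * h t x := by
      rw [← compl_Iic]
      exact (integral_add_compl measurableSet_Iic hgint).symm
    have split2 : ∫ t in Iic b, c t * h t x
        = (∫ t in Iic a, c t * h t x) + ∫ t in Ioc a b, c t * h t x := by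
      rw [← Iic_union_Ioc_eq_Iic hab]
      exact setIntegral_union (Iic_disjoint_Ioc le_rfl) measurableSet_Ioc I1 I2
    rw [hη x y, split1, split2,
      setIntegral_congr_fun measurableSet_Iic e1,
      setIntegral_congr_fun measurableSet_Ioc e2,
      setIntegral_congr_fun measurableSet_Ioi e3,
      integral_Ici_eq_integral_Ioi, intervalIntegral.integral_of_le hab, integral_neg]
    ring
  -- main computation
  have main1 : ∫ x, η x y * ρ x = ∫ x, ∫ t, f t x := by
    refine integral_congr_ae (ae_of_all _ (fun x => ?_))
    show η x y * ρ x = ∫ t, f t x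
    rw [claim1 x, ← integral_mul_const]
  rw [main1, ← integral_integral_swap hFint]
  have hz : ∀ t, ∫ x, f t x = 0 := by
    intro t
    have he : (fun x => f t x) = fun x => c t * (h t x * ρ x) := by
      funext x; rw [hf]; ring
    rw [he, integral_const_mul, hinner t, mul_zero]
  simp only [hz, integral_zero]
end

section
/- With η as above (under the weaker condition), for every y ∈ ℝ, the partial derivative ∂η/∂x(x,y) equals Φ(x)/ψ(x) for x < y and -(1-Φ(x))/ψ(x) for x > y, and ∫_{-∞}^∞ |∂η/∂x(x,y)|² ψ(x) dx = η(y,y). -/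
open MeasureTheory Real Set Filter Metric Topology

lemma ae_hasDerivAt_intervalPrimitive {f : ℝ → ℝ} (hf : LocallyIntegrable f) :
    ∀ᵐ x : ℝ, ∀ c : ℝ, HasDerivAt (fun x' => ∫ t in c..x', f t) (f x) x := by
  filter_upwards [IsUnifLocDoublingMeasure.ae_tendsto_average_norm_sub (μ := volume) hf 1]
    with x hx c
  have hii : ∀ a b : ℝ, IntervalIntegrable f volume a b := fun a b =>
    (hf.integrableOn_isCompact isCompact_uIcc).intervalIntegrable
  have δlim : Tendsto (fun x' : ℝ => |x' - x|) (𝓝[≠] x) (𝓝[>] 0) := by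
    rw [tendsto_nhdsWithin_iff]
    constructor
    · have : Tendsto (fun x' : ℝ => |x' - x|) (𝓝 x) (𝓝 |x - x|) :=
        ((continuous_id.sub continuous_const).abs).tendsto x
      simpa using this.mono_left nhdsWithin_le_nhds
    · filter_upwards [eventually_mem_nhdsWithin] with x' (hx' : x' ≠ x)
      exact abs_pos.2 (sub_ne_zero.2 hx')
  have xmem : ∀ᶠ x' : ℝ in 𝓝[≠] x, x ∈ closedBall x (1 * |x' - x|) := by
    filter_upwards with x'
    simp [abs_nonneg]
  have htend : Tendsto (fun x' => ⨍ t in closedBall x |x' - x|, ‖f t - f x‖) (𝓝[≠] x) (𝓝 0) :=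
    hx (fun _ => x) (fun x' => |x' - x|) δlim xmem
  rw [hasDerivAt_iff_tendsto]
  rw [← nhdsNE_sup_pure x, tendsto_sup]
  constructor
  · apply squeeze_zero' (g := fun x' => 2 * ⨍ t in closedBall x |x' - x|, ‖f t - f x‖)
    · filter_upwards with x'
      positivity
    · filter_upwards [eventually_mem_nhdsWithin] with x' (hx' : x' ≠ x)
      have hr : 0 < |x' - x| := abs_pos.2 (sub_ne_zero.2 hx')
      have hsub : (∫ t in c..x', f t) - (∫ t in c..x, f t) = ∫ t in x..x', f t := by
        rw [← intervalIntegral.integral_interval_sub_left (hii c x') (hii c x)]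
      have h1 : (∫ t in c..x', f t) - (∫ t in c..x, f t) - (x' - x) • f x
          = ∫ t in x..x', (f t - f x) := by
        rw [hsub, intervalIntegral.integral_sub (hii x x')
          (intervalIntegrable_const), intervalIntegral.integral_const]
      rw [h1]
      have h2 : ‖∫ t in x..x', (f t - f x)‖ ≤ ∫ t in uIoc x x', ‖f t - f x‖ :=
        intervalIntegral.norm_integral_le_integral_norm_uIoc
      have hball : IntegrableOn (fun t => ‖f t - f x‖) (closedBall x |x' - x|) := by
        exact ((hf.sub (locallyIntegrable_const (f x))).integrableOn_isCompact
          (isCompact_closedBall _ _)).norm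
      have h3 : ∫ t in uIoc x x', ‖f t - f x‖ ≤ ∫ t in closedBall x |x' - x|, ‖f t - f x‖ := by
        apply setIntegral_mono_set hball
        · filter_upwards with t using norm_nonneg _
        · apply HasSubset.Subset.eventuallyLE
          intro t ht
          rw [mem_closedBall, Real.dist_eq]
          rcases le_total x x' with h | h
          · rw [uIoc_of_le h] at ht
            rw [abs_of_nonneg (by linarith [ht.1.le])]
            rw [abs_of_nonneg (by linarith)]
            linarith [ht.2]
          · rw [uIoc_of_ge h] at ht
            rw [abs_of_nonpos (by linarith [ht.2])]
            rw [abs_of_nonpos (by linarith)]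
            linarith [ht.1]
      have h4 : ∫ t in closedBall x |x' - x|, ‖f t - f x‖
          = (2 * |x' - x|) * ⨍ t in closedBall x |x' - x|, ‖f t - f x‖ := by
        rw [setAverage_eq, Real.volume_real_closedBall (by positivity),
          smul_eq_mul, ← mul_assoc, mul_inv_cancel₀ (by positivity), one_mul]
      calc ‖x' - x‖⁻¹ * ‖∫ t in x..x', (f t - f x)‖
          ≤ ‖x' - x‖⁻¹ * ((2 * |x' - x|) * ⨍ t in closedBall x |x' - x|, ‖f t - f x‖) := by
            apply mul_le_mul_of_nonneg_left _ (by positivity)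
            exact (h2.trans h3).trans_eq h4
        _ = 2 * ⨍ t in closedBall x |x' - x|, ‖f t - f x‖ := by
            rw [Real.norm_eq_abs]
            field_simp
    · simpa using htend.const_mul 2
  · have : (fun x' => ‖x' - x‖⁻¹ * ‖(∫ t in c..x', f t) - (∫ t in c..x, f t) - (x' - x) • f x‖) x = 0 := by
      simp
    rw [← this]
    exact tendsto_pure_nhds _ x

theorem stmt8 (ρ ψ Φ : ℝ → ℝ) (η : ℝ → ℝ → ℝ)
    (hρpos : ∀ x, 0 < ρ x) (hρint : Integrable ρ) (hρ1 : ∫ x, ρ x = 1)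
    (hψpos : ∀ x, 0 < ψ x)
    (hψloc : LocallyIntegrable ψ)
    (hψinvloc : LocallyIntegrable (fun x => 1 / ψ x))
    (hΦ : ∀ x, Φ x = ∫ t in Iic x, ρ t)
    (hweak : ∀ c : ℝ, IntegrableOn (fun t => Φ t ^ 2 / ψ t) (Iic c) ∧
        IntegrableOn (fun t => (1 - Φ t) ^ 2 / ψ t) (Ici c))
    (hη : ∀ x y : ℝ, η x y =
        (∫ t in Iic (min x y), Φ t ^ 2 / ψ t)
        + (∫ t in Ici (max x y), (1 - Φ t) ^ 2 / ψ t)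
        - ∫ t in (min x y)..(max x y), Φ t * (1 - Φ t) / ψ t) :
    ∀ y : ℝ,
      (∀ᵐ x : ℝ, x ≠ y → HasDerivAt (fun x' => η x' y)
          (if x < y then Φ x / ψ x else -(1 - Φ x) / ψ x) x) ∧
      (∫ x, (if x < y then Φ x / ψ x else -(1 - Φ x) / ψ x) ^ 2 * ψ x) = η y y := by
  have hψ0 : ∀ x, ψ x ≠ 0 := fun x => (hψpos x).ne'
  have hΦ0 : ∀ x, 0 ≤ Φ x := by
    intro x
    rw [hΦ x]
    exact setIntegral_nonneg measurableSet_Iic fun t _ => (hρpos t).le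
  have hΦ1 : ∀ x, Φ x ≤ 1 := by
    intro x
    rw [hΦ x, ← hρ1]
    exact setIntegral_le_integral hρint (Eventually.of_forall fun t => (hρpos t).le)
  have hΦmono : Monotone Φ := by
    intro a b hab
    rw [hΦ a, hΦ b]
    exact setIntegral_mono_set hρint.integrableOn
      (Eventually.of_forall fun t => (hρpos t).le)
      (HasSubset.Subset.eventuallyLE (Iic_subset_Iic.2 hab))
  have hΦm : Measurable Φ := Monotone.measurable hΦmono
  set f₁ : ℝ → ℝ := fun t => Φ t ^ 2 / ψ t with hf₁
  set f₂ : ℝ → ℝ := fun t => Φ t * (1 - Φ t) / ψ t with hf₂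
  set f₃ : ℝ → ℝ := fun t => (1 - Φ t) ^ 2 / ψ t with hf₃
  have hψasm : AEStronglyMeasurable ψ volume := hψloc.aestronglyMeasurable
  have locInt : ∀ g : ℝ → ℝ, Measurable g → (∀ t, 0 ≤ g t) → (∀ t, g t ≤ 1) →
      LocallyIntegrable (fun t => g t / ψ t) := by
    intro g hg h0 h1
    have heq : (fun t => g t / ψ t) = fun t => g t * (1 / ψ t) := by
      funext t; rw [mul_one_div]
    rw [heq]
    apply hψinvloc.mono
    · exact hg.aestronglyMeasurable.mul hψinvloc.aestronglyMeasurable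
    · filter_upwards with t
      rw [norm_mul]
      calc ‖g t‖ * ‖1 / ψ t‖ ≤ 1 * ‖1 / ψ t‖ :=
            mul_le_mul_of_nonneg_right
              (by rw [Real.norm_eq_abs, abs_of_nonneg (h0 t)]; exact h1 t) (norm_nonneg _)
        _ = ‖1 / ψ t‖ := one_mul _
  have h1loc : LocallyIntegrable f₁ := by
    apply locInt _ (hΦm.pow_const 2)
    · intro t; positivity
    · intro t; exact pow_le_one₀ (hΦ0 t) (hΦ1 t)
  have h2loc : LocallyIntegrable f₂ := by
    apply locInt _ (hΦm.mul (measurable_const.sub hΦm))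
    · intro t; exact mul_nonneg (hΦ0 t) (by simp only [Pi.sub_apply]; linarith [hΦ1 t])
    · intro t; exact mul_le_one₀ (hΦ1 t) (by simp only [Pi.sub_apply]; linarith [hΦ1 t]) (by simp only [Pi.sub_apply]; linarith [hΦ0 t])
  have h3loc : LocallyIntegrable f₃ := by
    apply locInt _ ((measurable_const.sub hΦm).pow_const 2)
    · intro t; positivity
    · intro t; exact pow_le_one₀ (by simp only [Pi.sub_apply]; linarith [hΦ1 t]) (by simp only [Pi.sub_apply]; linarith [hΦ0 t])
  intro y
  constructor
  · filter_upwards [ae_hasDerivAt_intervalPrimitive h1loc,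
      ae_hasDerivAt_intervalPrimitive h2loc,
      ae_hasDerivAt_intervalPrimitive h3loc] with x H1 H2 H3 hxy
    rcases lt_or_gt_of_ne hxy with h | h
    · rw [if_pos h]
      have hval : Φ x / ψ x = f₁ x + f₂ x := by
        rw [hf₁, hf₂]
        field_simp
        ring
      rw [hval]
      have hD : HasDerivAt (fun x' => ((∫ t in Iic y, f₁ t) + (∫ t in Ici y, f₃ t))
          + ((∫ t in y..x', f₁ t) + (∫ t in y..x', f₂ t))) (f₁ x + f₂ x) x :=
        ((H1 y).add (H2 y)).const_add _
      apply hD.congr_of_eventuallyEq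
      filter_upwards [Iio_mem_nhds h] with x' (hx' : x' < y)
      rw [hη x' y, min_eq_left hx'.le, max_eq_right hx'.le]
      have e1 : (∫ t in Iic y, f₁ t) - (∫ t in Iic x', f₁ t) = ∫ t in x'..y, f₁ t :=
        intervalIntegral.integral_Iic_sub_Iic (hweak x').1 (hweak y).1
      rw [intervalIntegral.integral_symm x' y, intervalIntegral.integral_symm x' y] at *
      linarith [e1]
    · rw [if_neg (not_lt.2 h.le)]
      have hval : -(1 - Φ x) / ψ x = 0 - f₃ x - f₂ x := by
        rw [hf₃, hf₂]
        field_simp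
        ring
      rw [hval]
      have hD : HasDerivAt (fun x' => ((∫ t in Iic y, f₁ t) + (∫ t in Ici y, f₃ t))
          - (∫ t in y..x', f₃ t) - (∫ t in y..x', f₂ t)) (0 - f₃ x - f₂ x) x :=
        ((hasDerivAt_const x _).sub (H3 y)).sub (H2 y)
      apply hD.congr_of_eventuallyEq
      filter_upwards [Ioi_mem_nhds h] with x' (hx' : y < x')
      rw [hη x' y, min_eq_right hx'.le, max_eq_left hx'.le]
      have e1 : (∫ t in Ici y, f₃ t) = (∫ t in Ico y x', f₃ t) + ∫ t in Ici x', f₃ t := by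
        rw [← setIntegral_union ((Iio_disjoint_Ici le_rfl).mono_left Ico_subset_Iio_self)
          measurableSet_Ici ((hweak y).2.mono_set Ico_subset_Ici_self) (hweak x').2,
          Ico_union_Ici_eq_Ici hx'.le]
      have e2 : (∫ t in Ico y x', f₃ t) = ∫ t in y..x', f₃ t := by
        rw [intervalIntegral.integral_of_le hx'.le, integral_Ico_eq_integral_Ioo,
          integral_Ioc_eq_integral_Ioo]
      rw [e2] at e1
      linarith [e1]
  · have key1 : IntegrableOn (fun x => (if x < y then Φ x / ψ x else -(1 - Φ x) / ψ x) ^ 2 * ψ x)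
        (Iio y) := by
      apply ((hweak y).1.mono_set Iio_subset_Iic_self).congr_fun _ measurableSet_Iio
      intro x (hx : x < y)
      simp only [hx, if_true, hf₁]
      field_simp [hψ0 x]
      try ring
    have key2 : IntegrableOn (fun x => (if x < y then Φ x / ψ x else -(1 - Φ x) / ψ x) ^ 2 * ψ x)
        (Ici y) := by
      apply (hweak y).2.congr_fun _ measurableSet_Ici
      intro x (hx : y ≤ x)
      simp only [not_lt.2 hx, if_false, hf₃]
      field_simp [hψ0 x]
      try ring
    have hsplit : (∫ x, (if x < y then Φ x / ψ x else -(1 - Φ x) / ψ x) ^ 2 * ψ x)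
        = (∫ x in Iio y, (if x < y then Φ x / ψ x else -(1 - Φ x) / ψ x) ^ 2 * ψ x)
        + ∫ x in Ici y, (if x < y then Φ x / ψ x else -(1 - Φ x) / ψ x) ^ 2 * ψ x := by
      rw [← setIntegral_union (Iio_disjoint_Ici le_rfl) measurableSet_Ici key1 key2,
        Iio_union_Ici, setIntegral_univ]
    rw [hsplit, hη y y, min_self, max_self, intervalIntegral.integral_same, sub_zero]
    congr 1
    · rw [show (∫ t in Iic y, f₁ t) = ∫ t in Iio y, f₁ t from
        (setIntegral_congr_set (Iio_ae_eq_Iic (a := y))).symm]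
      apply setIntegral_congr_fun measurableSet_Iio
      intro x (hx : x < y)
      simp only [hx, if_true, hf₁]
      field_simp [hψ0 x]
      try ring
    · apply setIntegral_congr_fun measurableSet_Ici
      intro x (hx : y ≤ x)
      simp only [not_lt.2 hx, if_false, hf₃]
      field_simp [hψ0 x]
      try ring
end

section
/- Under the weaker condition, for all x, y ∈ ℝ: η(x,y) ≤ η(max(x,y), max(x,y)) and η(x,y) ≤ η(min(x,y), min(x,y)), and η(y,y) = ∫_{-∞}^y Φ(t)²/ψ(t) dt + ∫_y^∞ (1-Φ(t))²/ψ(t) dt ≥ 0. -/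
open MeasureTheory Real Set

theorem stmt9 (ρ ψ Φ : ℝ → ℝ) (η : ℝ → ℝ → ℝ)
    (hρpos : ∀ x, 0 < ρ x) (hρint : Integrable ρ) (hρ1 : ∫ x, ρ x = 1)
    (hψpos : ∀ x, 0 < ψ x)
    (hψloc : LocallyIntegrable ψ)
    (hψinvloc : LocallyIntegrable (fun x => 1 / ψ x))
    (hΦ : ∀ x, Φ x = ∫ t in Iic x, ρ t)
    (hweak : ∀ c : ℝ, IntegrableOn (fun t => Φ t ^ 2 / ψ t) (Iic c) ∧
        IntegrableOn (fun t => (1 - Φ t) ^ 2 / ψ t) (Ici c))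
    (hη : ∀ x y : ℝ, η x y =
        (∫ t in Iic (min x y), Φ t ^ 2 / ψ t)
        + (∫ t in Ici (max x y), (1 - Φ t) ^ 2 / ψ t)
        - ∫ t in (min x y)..(max x y), Φ t * (1 - Φ t) / ψ t) :
    ∀ x y : ℝ,
      η x y ≤ η (max x y) (max x y) ∧
      η x y ≤ η (min x y) (min x y) ∧
      η y y = (∫ t in Iic y, Φ t ^ 2 / ψ t) + (∫ t in Ici y, (1 - Φ t) ^ 2 / ψ t) ∧
      0 ≤ η y y := by
  have hΦ0 : ∀ t, 0 ≤ Φ t := fun t => by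
    rw [hΦ]; exact setIntegral_nonneg measurableSet_Iic (fun s _ => (hρpos s).le)
  have hΦ1 : ∀ t, Φ t ≤ 1 := fun t => by
    rw [hΦ, ← hρ1]
    exact setIntegral_le_integral hρint (Filter.Eventually.of_forall fun s => (hρpos s).le)
  have hf0 : ∀ t, 0 ≤ Φ t ^ 2 / ψ t := fun t => div_nonneg (sq_nonneg _) (hψpos t).le
  have hg0 : ∀ t, 0 ≤ (1 - Φ t) ^ 2 / ψ t := fun t => div_nonneg (sq_nonneg _) (hψpos t).le
  have hh0 : ∀ t, 0 ≤ Φ t * (1 - Φ t) / ψ t := fun t =>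
    div_nonneg (mul_nonneg (hΦ0 t) (by linarith [hΦ1 t])) (hψpos t).le
  -- the η y y formula and nonnegativity, for arbitrary y
  have hyy : ∀ y : ℝ, η y y
      = (∫ t in Iic y, Φ t ^ 2 / ψ t) + (∫ t in Ici y, (1 - Φ t) ^ 2 / ψ t) := by
    intro y
    rw [hη y y]
    simp [min_self, max_self, intervalIntegral.integral_same]
  have hyy0 : ∀ y : ℝ, 0 ≤ η y y := by
    intro y
    rw [hyy y]
    have h1 : 0 ≤ ∫ t in Iic y, Φ t ^ 2 / ψ t :=
      setIntegral_nonneg measurableSet_Iic (fun t _ => hf0 t)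
    have h2 : 0 ≤ ∫ t in Ici y, (1 - Φ t) ^ 2 / ψ t :=
      setIntegral_nonneg measurableSet_Ici (fun t _ => hg0 t)
    linarith
  have hΦmono : Monotone Φ := fun a b hab => by
    rw [hΦ, hΦ]
    exact setIntegral_mono_set hρint.integrableOn
      (Filter.Eventually.of_forall fun s => (hρpos s).le)
      (HasSubset.Subset.eventuallyLE (Iic_subset_Iic.mpr hab))
  have hΦmeas : Measurable Φ := hΦmono.measurable
  intro x y
  set m := min x y with hm
  set M := max x y with hM
  have hmM : m ≤ M := min_le_max
  -- integrability of the cross term on Ioc m M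
  have h3meas : AEStronglyMeasurable (fun t => Φ t * (1 - Φ t) / ψ t) volume := by
    have heq : (fun t => Φ t * (1 - Φ t) / ψ t)
        = fun t => (Φ t * (1 - Φ t)) * (1 / ψ t) := by
      funext t; rw [mul_one_div]
    rw [heq]
    exact (hΦmeas.aestronglyMeasurable.mul
      ((measurable_const.sub hΦmeas).aestronglyMeasurable)).mul
      hψinvloc.aestronglyMeasurable
  have h3int : IntegrableOn (fun t => Φ t * (1 - Φ t) / ψ t) (Ioc m M) := by
    have hinv : IntegrableOn (fun t => 1 / ψ t) (Icc m M) :=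
      hψinvloc.integrableOn_isCompact isCompact_Icc
    have hinv' : IntegrableOn (fun t => (1/4 : ℝ) * (1 / ψ t)) (Ioc m M) :=
      (hinv.mono_set Ioc_subset_Icc_self).const_mul _
    refine Integrable.mono hinv' h3meas.restrict ?_
    refine Filter.Eventually.of_forall fun t => ?_
    have h1 : 0 < ψ t := hψpos t
    have h2 : Φ t * (1 - Φ t) ≤ 1/4 := by nlinarith [sq_nonneg (Φ t - 1/2)]
    have h4 : (0:ℝ) ≤ (1/4) * (1 / ψ t) := by positivity
    rw [Real.norm_eq_abs, Real.norm_eq_abs, abs_of_nonneg (hh0 t), abs_of_nonneg h4,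
      mul_one_div]
    exact (div_le_div_iff_of_pos_right h1).mpr h2
  -- splitting the integrals
  have hsplitf : (∫ t in Iic M, Φ t ^ 2 / ψ t)
      = (∫ t in Iic m, Φ t ^ 2 / ψ t) + ∫ t in Ioc m M, Φ t ^ 2 / ψ t := by
    rw [← Iic_union_Ioc_eq_Iic hmM]
    exact setIntegral_union (Iic_disjoint_Ioc le_rfl) measurableSet_Ioc
      (hweak m).1 ((hweak M).1.mono_set Ioc_subset_Iic_self)
  have hIci : ∀ c : ℝ, (∫ t in Ici c, (1 - Φ t) ^ 2 / ψ t)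
      = ∫ t in Ioi c, (1 - Φ t) ^ 2 / ψ t := fun c => integral_Ici_eq_integral_Ioi
  have hsplitg : (∫ t in Ici m, (1 - Φ t) ^ 2 / ψ t)
      = (∫ t in Ioc m M, (1 - Φ t) ^ 2 / ψ t) + ∫ t in Ici M, (1 - Φ t) ^ 2 / ψ t := by
    rw [hIci m, hIci M, ← Ioc_union_Ioi_eq_Ioi hmM]
    refine setIntegral_union (Ioc_disjoint_Ioi le_rfl) measurableSet_Ioi
      ((hweak m).2.mono_set ?_) ((hweak M).2.mono_set Ioi_subset_Ici_self)
    exact Ioc_subset_Ioi_self.trans Ioi_subset_Ici_self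
  have hIoc_f0 : 0 ≤ ∫ t in Ioc m M, Φ t ^ 2 / ψ t :=
    setIntegral_nonneg measurableSet_Ioc (fun t _ => hf0 t)
  have hIoc_g0 : 0 ≤ ∫ t in Ioc m M, (1 - Φ t) ^ 2 / ψ t :=
    setIntegral_nonneg measurableSet_Ioc (fun t _ => hg0 t)
  have hIoc_h0 : 0 ≤ ∫ t in Ioc m M, Φ t * (1 - Φ t) / ψ t :=
    setIntegral_nonneg measurableSet_Ioc (fun t _ => hh0 t)
  have hint : (∫ t in m..M, Φ t * (1 - Φ t) / ψ t)
      = ∫ t in Ioc m M, Φ t * (1 - Φ t) / ψ t := intervalIntegral.integral_of_le hmM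
  have hxy : η x y = (∫ t in Iic m, Φ t ^ 2 / ψ t)
      + (∫ t in Ici M, (1 - Φ t) ^ 2 / ψ t)
      - ∫ t in Ioc m M, Φ t * (1 - Φ t) / ψ t := by
    rw [hη x y, ← hm, ← hM, hint]
  refine ⟨?_, ?_, hyy y, hyy0 y⟩
  · rw [hxy, hyy M, hsplitf]
    linarith
  · rw [hxy, hyy m, hsplitg]
    linarith
end

section
/- Under the stronger condition ∫_{-∞}^c Φ/ψ < ∞ and ∫_c^∞ (1-Φ)/ψ < ∞ for all finite c, the kernel diagonal integrates to the constant C(ρ,ψ): ∫_{-∞}^∞ η(y,y) ρ(y) dy = ∫_{-∞}^∞ Φ(t)(1-Φ(t))/ψ(t) dt. -/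
open MeasureTheory Real Set
open scoped ENNReal

private lemma swap_left (G R : ℝ → ℝ≥0∞) (hG : AEMeasurable G) (hR : AEMeasurable R)
    (hG' : ∀ t, G t ≠ ⊤) (hR' : ∀ y, R y ≠ ⊤) :
    ∫⁻ y, (∫⁻ t in Iic y, G t) * R y = ∫⁻ t, G t * ∫⁻ y in Ici t, R y := by
  have h1 : ∀ y, (∫⁻ t in Iic y, G t) * R y = ∫⁻ t, (Iic y).indicator G t * R y := by
    intro y
    rw [← lintegral_indicator measurableSet_Iic, ← lintegral_mul_const' (R y) _ (hR' y)]
  have hm : AEMeasurable (fun p : ℝ × ℝ => (Iic p.1).indicator G p.2 * R p.1)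
      (volume.prod volume) := by
    have heq : (fun p : ℝ × ℝ => (Iic p.1).indicator G p.2 * R p.1)
        = ({p : ℝ × ℝ | p.2 ≤ p.1}).indicator (fun p => G p.2 * R p.1) := by
      ext p; by_cases h : p.2 ≤ p.1 <;> simp [Set.indicator, h]
    rw [heq]
    exact (hG.comp_snd.mul hR.comp_fst).indicator (measurableSet_le measurable_snd measurable_fst)
  calc ∫⁻ y, (∫⁻ t in Iic y, G t) * R y
      = ∫⁻ y, ∫⁻ t, (Iic y).indicator G t * R y := by simp_rw [h1]
    _ = ∫⁻ t, ∫⁻ y, (Iic y).indicator G t * R y := lintegral_lintegral_swap hm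
    _ = ∫⁻ t, G t * ∫⁻ y in Ici t, R y := by
        refine lintegral_congr fun t => ?_
        have : ∀ y, (Iic y).indicator G t * R y
            = (Ici t).indicator (fun y => G t * R y) y := by
          intro y; by_cases h : t ≤ y <;> simp [Set.indicator, h]
        simp_rw [this, lintegral_indicator measurableSet_Ici,
          lintegral_const_mul' _ _ (hG' t)]

private lemma swap_right (H R : ℝ → ℝ≥0∞) (hH : AEMeasurable H) (hR : AEMeasurable R)
    (hH' : ∀ t, H t ≠ ⊤) (hR' : ∀ y, R y ≠ ⊤) :
    ∫⁻ y, (∫⁻ t in Ici y, H t) * R y = ∫⁻ t, H t * ∫⁻ y in Iic t, R y := by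
  have h1 : ∀ y, (∫⁻ t in Ici y, H t) * R y = ∫⁻ t, (Ici y).indicator H t * R y := by
    intro y
    rw [← lintegral_indicator measurableSet_Ici, ← lintegral_mul_const' (R y) _ (hR' y)]
  have hm : AEMeasurable (fun p : ℝ × ℝ => (Ici p.1).indicator H p.2 * R p.1)
      (volume.prod volume) := by
    have heq : (fun p : ℝ × ℝ => (Ici p.1).indicator H p.2 * R p.1)
        = ({p : ℝ × ℝ | p.1 ≤ p.2}).indicator (fun p => H p.2 * R p.1) := by
      ext p; by_cases h : p.1 ≤ p.2 <;> simp [Set.indicator, h]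
    rw [heq]
    exact (hH.comp_snd.mul hR.comp_fst).indicator (measurableSet_le measurable_fst measurable_snd)
  calc ∫⁻ y, (∫⁻ t in Ici y, H t) * R y
      = ∫⁻ y, ∫⁻ t, (Ici y).indicator H t * R y := by simp_rw [h1]
    _ = ∫⁻ t, ∫⁻ y, (Ici y).indicator H t * R y := lintegral_lintegral_swap hm
    _ = ∫⁻ t, H t * ∫⁻ y in Iic t, R y := by
        refine lintegral_congr fun t => ?_
        have : ∀ y, (Ici y).indicator H t * R y
            = (Iic t).indicator (fun y => H t * R y) y := by
          intro y; by_cases h : y ≤ t <;> simp [Set.indicator, h]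
        simp_rw [this, lintegral_indicator measurableSet_Iic,
          lintegral_const_mul' _ _ (hH' t)]

theorem stmt10 (ρ ψ Φ : ℝ → ℝ)
    (hρpos : ∀ x, 0 < ρ x) (hρint : Integrable ρ) (hρ1 : ∫ x, ρ x = 1)
    (hψpos : ∀ x, 0 < ψ x)
    (hψloc : LocallyIntegrable ψ)
    (hψinvloc : LocallyIntegrable (fun x => 1 / ψ x))
    (hΦ : ∀ x, Φ x = ∫ t in Iic x, ρ t)
    (hstrong : ∀ c : ℝ, IntegrableOn (fun t => Φ t / ψ t) (Iic c) ∧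
        IntegrableOn (fun t => (1 - Φ t) / ψ t) (Ici c)) :
    ∫ y, ((∫ t in Iic y, Φ t ^ 2 / ψ t) + (∫ t in Ici y, (1 - Φ t) ^ 2 / ψ t)) * ρ y
      = ∫ t, Φ t * (1 - Φ t) / ψ t := by
  -- basic facts about Φ
  have hΦmono : Monotone Φ := by
    intro a b hab
    rw [hΦ a, hΦ b]
    exact setIntegral_mono_set hρint.integrableOn
      (ae_of_all _ fun x => (hρpos x).le)
      ((Iic_subset_Iic.mpr hab).eventuallyLE)
  have hΦmeas : Measurable Φ := hΦmono.measurable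
  have hΦ0 : ∀ x, 0 ≤ Φ x := fun x => by
    rw [hΦ x]; exact setIntegral_nonneg measurableSet_Iic fun t _ => (hρpos t).le
  have hΦ1 : ∀ x, Φ x ≤ 1 := fun x => by
    rw [hΦ x, ← hρ1]
    exact setIntegral_le_integral hρint (ae_of_all _ fun t => (hρpos t).le)
  -- the two kernel pieces
  set g : ℝ → ℝ := fun t => Φ t ^ 2 / ψ t with hgdef
  set h : ℝ → ℝ := fun t => (1 - Φ t) ^ 2 / ψ t with hhdef
  have hg0 : ∀ t, 0 ≤ g t := fun t => div_nonneg (sq_nonneg _) (hψpos t).le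
  have hh0 : ∀ t, 0 ≤ h t := fun t => div_nonneg (sq_nonneg _) (hψpos t).le
  have hψinv_meas : AEStronglyMeasurable (fun x => 1 / ψ x) volume :=
    hψinvloc.aestronglyMeasurable
  have hg_meas : AEStronglyMeasurable g volume := by
    have : g = fun t => Φ t ^ 2 * (1 / ψ t) := by
      funext t; rw [hgdef]; ring
    rw [this]
    exact ((hΦmeas.pow_const 2).aestronglyMeasurable).mul hψinv_meas
  have hh_meas : AEStronglyMeasurable h volume := by
    have : h = fun t => (1 - Φ t) ^ 2 * (1 / ψ t) := by
      funext t; rw [hhdef]; ring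
    rw [this]
    exact (((measurable_const.sub hΦmeas).pow_const 2).aestronglyMeasurable).mul hψinv_meas
  have hg_int : ∀ y, IntegrableOn g (Iic y) := by
    intro y
    refine Integrable.mono ((hstrong y).1) hg_meas.restrict (ae_of_all _ fun t => ?_)
    rw [Real.norm_eq_abs, Real.norm_eq_abs, abs_of_nonneg (hg0 t),
      abs_of_nonneg (div_nonneg (hΦ0 t) (hψpos t).le)]
    exact (div_le_div_iff_of_pos_right (hψpos t)).mpr
      (by nlinarith [hΦ0 t, hΦ1 t])
  have hh_int : ∀ y, IntegrableOn h (Ici y) := by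
    intro y
    refine Integrable.mono ((hstrong y).2) hh_meas.restrict (ae_of_all _ fun t => ?_)
    rw [Real.norm_eq_abs, Real.norm_eq_abs, abs_of_nonneg (hh0 t),
      abs_of_nonneg (div_nonneg (by linarith [hΦ1 t]) (hψpos t).le)]
    exact (div_le_div_iff_of_pos_right (hψpos t)).mpr
      (by nlinarith [hΦ0 t, hΦ1 t])
  -- the partial integrals
  set A : ℝ → ℝ := fun y => ∫ t in Iic y, g t with hAdef
  set B : ℝ → ℝ := fun y => ∫ t in Ici y, h t with hBdef
  have hA0 : ∀ y, 0 ≤ A y := fun y =>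
    setIntegral_nonneg measurableSet_Iic fun t _ => hg0 t
  have hB0 : ∀ y, 0 ≤ B y := fun y =>
    setIntegral_nonneg measurableSet_Ici fun t _ => hh0 t
  have hAmono : Monotone A := by
    intro a b hab
    exact setIntegral_mono_set (hg_int b) (ae_of_all _ fun t => hg0 t)
      ((Iic_subset_Iic.mpr hab).eventuallyLE)
  have hBanti : Antitone B := by
    intro a b hab
    exact setIntegral_mono_set (hh_int a) (ae_of_all _ fun t => hh0 t)
      ((Ici_subset_Ici.mpr hab).eventuallyLE)
  have hFmeas : AEStronglyMeasurable (fun y => (A y + B y) * ρ y) volume :=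
    ((hAmono.measurable.add hBanti.measurable).aestronglyMeasurable).mul
      hρint.aestronglyMeasurable
  -- ℝ≥0∞-valued versions
  set G : ℝ → ℝ≥0∞ := fun t => ENNReal.ofReal (g t) with hGdef
  set H : ℝ → ℝ≥0∞ := fun t => ENNReal.ofReal (h t) with hHdef
  set R : ℝ → ℝ≥0∞ := fun y => ENNReal.ofReal (ρ y) with hRdef
  have hGmeas : AEMeasurable G volume := hg_meas.aemeasurable.ennreal_ofReal
  have hHmeas : AEMeasurable H volume := hh_meas.aemeasurable.ennreal_ofReal
  have hRmeas : AEMeasurable R volume := hρint.aemeasurable.ennreal_ofReal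
  -- values of ∫⁻ R over rays
  have hRIic : ∀ t, ∫⁻ y in Iic t, R y = ENNReal.ofReal (Φ t) := by
    intro t
    rw [hΦ t, ofReal_integral_eq_lintegral_ofReal hρint.integrableOn
      (ae_of_all _ fun x => (hρpos x).le)]
  have hSplit : ∀ t, ∫ y in Ici t, ρ y = 1 - Φ t := by
    intro t
    have h2 : (∫ y in Iio t, ρ y) + ∫ y in Ici t, ρ y = 1 := by
      rw [show Ici t = (Iio t)ᶜ from compl_Iio.symm,
        integral_add_compl measurableSet_Iio hρint, hρ1]
    have h3 : (∫ y in Iio t, ρ y) = Φ t := by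
      rw [hΦ t, integral_Iic_eq_integral_Iio]
    linarith
  have hRIci : ∀ t, ∫⁻ y in Ici t, R y = ENNReal.ofReal (1 - Φ t) := by
    intro t
    rw [← hSplit t, ofReal_integral_eq_lintegral_ofReal hρint.integrableOn
      (ae_of_all _ fun x => (hρpos x).le)]
  -- convert LHS to a lintegral
  have hLHS : ∫ y, (A y + B y) * ρ y
      = (∫⁻ y, ENNReal.ofReal ((A y + B y) * ρ y)).toReal := by
    exact integral_eq_lintegral_of_nonneg_ae
      (ae_of_all _ fun y =>
        mul_nonneg (add_nonneg (hA0 y) (hB0 y)) (hρpos y).le) hFmeas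
  have hofReal : ∀ y, ENNReal.ofReal ((A y + B y) * ρ y)
      = (∫⁻ t in Iic y, G t) * R y + (∫⁻ t in Ici y, H t) * R y := by
    intro y
    rw [ENNReal.ofReal_mul (add_nonneg (hA0 y) (hB0 y)),
      ENNReal.ofReal_add (hA0 y) (hB0 y), add_mul]
    congr 2
    · exact ofReal_integral_eq_lintegral_ofReal (hg_int y)
        (ae_of_all _ fun t => hg0 t)
    · exact ofReal_integral_eq_lintegral_ofReal (hh_int y)
        (ae_of_all _ fun t => hh0 t)
  have hAGmeas : AEMeasurable (fun y => (∫⁻ t in Iic y, G t) * R y) volume := by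
    have : Monotone (fun y => ∫⁻ t in Iic y, G t) := fun a b hab =>
      lintegral_mono_set (Iic_subset_Iic.mpr hab)
    exact this.measurable.aemeasurable.mul hRmeas
  have hkey : ∫⁻ y, ENNReal.ofReal ((A y + B y) * ρ y)
      = ∫⁻ t, ENNReal.ofReal (Φ t * (1 - Φ t) / ψ t) := by
    calc ∫⁻ y, ENNReal.ofReal ((A y + B y) * ρ y)
        = ∫⁻ y, ((∫⁻ t in Iic y, G t) * R y + (∫⁻ t in Ici y, H t) * R y) :=
          lintegral_congr hofReal
      _ = (∫⁻ y, (∫⁻ t in Iic y, G t) * R y) + ∫⁻ y, (∫⁻ t in Ici y, H t) * R y :=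
          lintegral_add_left' hAGmeas _
      _ = (∫⁻ t, G t * ∫⁻ y in Ici t, R y) + ∫⁻ t, H t * ∫⁻ y in Iic t, R y := by
          rw [swap_left G R hGmeas hRmeas (fun t => ENNReal.ofReal_ne_top)
            (fun y => ENNReal.ofReal_ne_top),
            swap_right H R hHmeas hRmeas (fun t => ENNReal.ofReal_ne_top)
            (fun y => ENNReal.ofReal_ne_top)]
      _ = (∫⁻ t, G t * ENNReal.ofReal (1 - Φ t)) + ∫⁻ t, H t * ENNReal.ofReal (Φ t) := by
          simp_rw [hRIci, hRIic]
      _ = ∫⁻ t, (G t * ENNReal.ofReal (1 - Φ t) + H t * ENNReal.ofReal (Φ t)) := by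
          refine (lintegral_add_left' (hGmeas.mul ?_) _).symm
          exact ((measurable_const.sub hΦmeas).aemeasurable).ennreal_ofReal
      _ = ∫⁻ t, ENNReal.ofReal (Φ t * (1 - Φ t) / ψ t) := by
          refine lintegral_congr fun t => ?_
          rw [hGdef, hHdef, ← ENNReal.ofReal_mul (hg0 t), ← ENNReal.ofReal_mul (hh0 t),
            ← ENNReal.ofReal_add (mul_nonneg (hg0 t) (by linarith [hΦ1 t]))
              (mul_nonneg (hh0 t) (hΦ0 t))]
          congr 1
          rw [hgdef, hhdef]
          have hψne : ψ t ≠ 0 := (hψpos t).ne'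
          field_simp
          ring
  -- convert RHS to a lintegral
  have hRHS : ∫ t, Φ t * (1 - Φ t) / ψ t
      = (∫⁻ t, ENNReal.ofReal (Φ t * (1 - Φ t) / ψ t)).toReal := by
    refine integral_eq_lintegral_of_nonneg_ae
      (ae_of_all _ fun t =>
        div_nonneg (mul_nonneg (hΦ0 t) (by linarith [hΦ1 t])) (hψpos t).le) ?_
    have : (fun t => Φ t * (1 - Φ t) / ψ t)
        = fun t => (Φ t * (1 - Φ t)) * (1 / ψ t) := by
      funext t; ring
    rw [this]
    exact ((hΦmeas.mul (measurable_const.sub hΦmeas)).aestronglyMeasurable).mul hψinv_meas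
  rw [show (fun y => ((∫ t in Iic y, Φ t ^ 2 / ψ t) + ∫ t in Ici y, (1 - Φ t) ^ 2 / ψ t) * ρ y)
      = fun y => (A y + B y) * ρ y from rfl] at *
  rw [hLHS, hRHS, hkey]
end

section
/- Under the stronger condition, η admits the alternative representation η(x,y) = ∫_{-∞}^{min(x,y)} Φ(t)/ψ(t) dt + ∫_{max(x,y)}^∞ (1-Φ(t))/ψ(t) dt - C(ρ,ψ), where C(ρ,ψ) = ∫_{-∞}^∞ Φ(t)(1-Φ(t))/ψ(t) dt. -/
open MeasureTheory Real Set

theorem stmt11 (ρ ψ Φ : ℝ → ℝ) (η : ℝ → ℝ → ℝ)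
    (hρpos : ∀ x, 0 < ρ x) (hρint : Integrable ρ) (hρ1 : ∫ x, ρ x = 1)
    (hψpos : ∀ x, 0 < ψ x)
    (hψloc : LocallyIntegrable ψ)
    (hψinvloc : LocallyIntegrable (fun x => 1 / ψ x))
    (hΦ : ∀ x, Φ x = ∫ t in Iic x, ρ t)
    (hstrong : ∀ c : ℝ, IntegrableOn (fun t => Φ t / ψ t) (Iic c) ∧
        IntegrableOn (fun t => (1 - Φ t) / ψ t) (Ici c))
    (hη : ∀ x y : ℝ, η x y =
        (∫ t in Iic (min x y), Φ t ^ 2 / ψ t)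
        + (∫ t in Ici (max x y), (1 - Φ t) ^ 2 / ψ t)
        - ∫ t in (min x y)..(max x y), Φ t * (1 - Φ t) / ψ t) :
    ∀ x y : ℝ, η x y =
      (∫ t in Iic (min x y), Φ t / ψ t)
      + (∫ t in Ici (max x y), (1 - Φ t) / ψ t)
      - ∫ t, Φ t * (1 - Φ t) / ψ t := by
  intro x y
  set m := min x y with hm
  set M := max x y with hM
  have hmM : m ≤ M := min_le_max
  have hΦ0 : ∀ t, 0 ≤ Φ t := fun t => by
    rw [hΦ t]; exact setIntegral_nonneg measurableSet_Iic fun s _ => (hρpos s).le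
  have hΦ1 : ∀ t, Φ t ≤ 1 := fun t => by
    rw [hΦ t, ← hρ1]
    exact setIntegral_le_integral hρint (ae_of_all _ fun s => (hρpos s).le)
  have hΦmono : Monotone Φ := fun a b hab => by
    rw [hΦ a, hΦ b]
    exact setIntegral_mono_set hρint.integrableOn (ae_of_all _ fun s => (hρpos s).le)
      (HasSubset.Subset.eventuallyLE (Iic_subset_Iic.2 hab))
  have hΦmeas : Measurable Φ := hΦmono.measurable
  set g : ℝ → ℝ := fun t => Φ t * (1 - Φ t) / ψ t with hg
  -- integrability of g on Iic c
  have hgIic : ∀ c, IntegrableOn g (Iic c) := by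
    intro c
    have h1 : Integrable (fun t => (1 - Φ t) * (Φ t / ψ t))
        (volume.restrict (Iic c)) := by
      refine Integrable.bdd_mul (hstrong c).1
        ((measurable_const.sub hΦmeas).aestronglyMeasurable) (c := 1) (ae_of_all _ fun t => ?_)
      rw [Real.norm_eq_abs]
      exact abs_le.2 ⟨by linarith [hΦ1 t], by linarith [hΦ0 t]⟩
    have : (fun t => (1 - Φ t) * (Φ t / ψ t)) = g := funext fun t => by
      simp only [hg]; ring
    rwa [this] at h1
  have hgIci : ∀ c, IntegrableOn g (Ici c) := by
    intro c
    have h1 : Integrable (fun t => Φ t * ((1 - Φ t) / ψ t))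
        (volume.restrict (Ici c)) := by
      refine Integrable.bdd_mul (hstrong c).2 hΦmeas.aestronglyMeasurable
        (c := 1) (ae_of_all _ fun t => ?_)
      rw [Real.norm_eq_abs]
      exact abs_le.2 ⟨by linarith [hΦ0 t], by linarith [hΦ1 t]⟩
    have : (fun t => Φ t * ((1 - Φ t) / ψ t)) = g := funext fun t => by
      simp only [hg]; ring
    rwa [this] at h1
  have hgInt : Integrable g := by
    rw [← integrableOn_univ, ← Iic_union_Ici (a := (0:ℝ))]
    exact (hgIic 0).union (hgIci 0)
  -- split the total integral of g
  have hsplit1 : (∫ t in Iic m, g t) + ∫ t in Ioi m, g t = ∫ t, g t :=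
    intervalIntegral.integral_Iic_add_Ioi hgInt.integrableOn hgInt.integrableOn
  have hsplit2 : (∫ t in Ioc m M, g t) + ∫ t in Ioi M, g t = ∫ t in Ioi m, g t := by
    rw [← setIntegral_union (Ioc_disjoint_Ioi le_rfl) measurableSet_Ioi
      hgInt.integrableOn hgInt.integrableOn, Ioc_union_Ioi_eq_Ioi hmM]
  have hIciIoi : ∫ t in Ici M, g t = ∫ t in Ioi M, g t :=
    integral_Ici_eq_integral_Ioi
  have hinterval : ∫ t in m..M, Φ t * (1 - Φ t) / ψ t = ∫ t in Ioc m M, g t :=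
    intervalIntegral.integral_of_le hmM
  -- decompose the squared integrands
  have hsq1 : ∫ t in Iic m, Φ t ^ 2 / ψ t
      = (∫ t in Iic m, Φ t / ψ t) - ∫ t in Iic m, g t := by
    rw [← integral_sub (hstrong m).1 (hgIic m)]
    refine setIntegral_congr_fun measurableSet_Iic fun t _ => ?_
    have : ψ t ≠ 0 := (hψpos t).ne'
    simp only [hg]; field_simp
    ring
  have hsq2 : ∫ t in Ici M, (1 - Φ t) ^ 2 / ψ t
      = (∫ t in Ici M, (1 - Φ t) / ψ t) - ∫ t in Ici M, g t := by
    rw [← integral_sub (hstrong M).2 (hgIci M)]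
    refine setIntegral_congr_fun measurableSet_Ici fun t _ => ?_
    have : ψ t ≠ 0 := (hψpos t).ne'
    simp only [hg]; field_simp
  have := hη x y
  rw [← hm, ← hM] at this
  rw [this, hsq1, hsq2, hinterval]
  have hgdef : ∀ s : Set ℝ, (∫ t in s, Φ t * (1 - Φ t) / ψ t) = ∫ t in s, g t :=
    fun s => rfl
  have hgdef' : (∫ t, Φ t * (1 - Φ t) / ψ t) = ∫ t, g t := rfl
  rw [hgdef']
  linarith [hsplit1, hsplit2, hIciIoi]
end

section
/- Under the stronger condition, the norms on ℋ and 𝒲 are equivalent: for every f with ‖f‖_ℋ < ∞, ‖f‖²_𝒲 ≤ ‖f‖²_ℋ ≤ (1 + γ C(ρ,ψ)) ‖f‖²_𝒲. -/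
open MeasureTheory Real Set

set_option maxHeartbeats 1000000 in
theorem stmt14 (ρ ψ Φ : ℝ → ℝ) (γ : ℝ) (hγ : 0 < γ)
    (hρpos : ∀ x, 0 < ρ x) (hρint : Integrable ρ) (hρ1 : ∫ x, ρ x = 1)
    (hψpos : ∀ x, 0 < ψ x)
    (hψloc : LocallyIntegrable ψ)
    (hψinvloc : LocallyIntegrable (fun x => 1 / ψ x))
    (hΦ : ∀ x, Φ x = ∫ t in Iic x, ρ t)
    (hstrong : ∀ c : ℝ, IntegrableOn (fun t => Φ t / ψ t) (Iic c) ∧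
        IntegrableOn (fun t => (1 - Φ t) / ψ t) (Ici c))
    (hC : Integrable (fun t => Φ t * (1 - Φ t) / ψ t))
    (f f' : ℝ → ℝ)
    (hf'loc : LocallyIntegrable f')
    (hAC : ∀ a b : ℝ, f b - f a = ∫ t in a..b, f' t)
    (hfL1 : Integrable (fun x => f x * ρ x))
    (hfL2 : Integrable (fun x => f x ^ 2 * ρ x))
    (hf'L2 : Integrable (fun x => f' x ^ 2 * ψ x)) :
    (∫ x, f x * ρ x) ^ 2 + (1 / γ) * (∫ x, f' x ^ 2 * ψ x)
        ≤ (∫ x, f x ^ 2 * ρ x) + (1 / γ) * (∫ x, f' x ^ 2 * ψ x) ∧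
    (∫ x, f x ^ 2 * ρ x) + (1 / γ) * (∫ x, f' x ^ 2 * ψ x)
        ≤ (1 + γ * ∫ t, Φ t * (1 - Φ t) / ψ t) *
          ((∫ x, f x * ρ x) ^ 2 + (1 / γ) * (∫ x, f' x ^ 2 * ψ x)) := by
  classical
  set C := ∫ t, Φ t * (1 - Φ t) / ψ t with hCdef
  set D := ∫ x, f' x ^ 2 * ψ x with hDdef
  set m := ∫ x, f x * ρ x with hmdef
  set V := ∫ x, f x ^ 2 * ρ x with hVdef
  have hρ0 : ∀ x, 0 ≤ ρ x := fun x => (hρpos x).le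
  have hψ0 : ∀ x, 0 ≤ ψ x := fun x => (hψpos x).le
  have hΦ0 : ∀ t, 0 ≤ Φ t := fun t => by
    rw [hΦ]; exact setIntegral_nonneg measurableSet_Iic fun x _ => hρ0 x
  have hΦ1 : ∀ t, Φ t ≤ 1 := fun t => by
    rw [hΦ, ← hρ1]
    exact setIntegral_le_integral hρint (Filter.Eventually.of_forall hρ0)
  have hΦmono : Monotone Φ := fun s t hst => by
    rw [hΦ, hΦ]
    exact setIntegral_mono_set hρint.integrableOn
      (Filter.Eventually.of_forall hρ0) ((Iic_subset_Iic.2 hst).eventuallyLE)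
  have hΦmeas : Measurable Φ := hΦmono.measurable
  have hψaem : AEMeasurable ψ := hψloc.aestronglyMeasurable.aemeasurable
  have hρaem : AEMeasurable ρ := hρint.aemeasurable
  have hf'sm : AEStronglyMeasurable f' volume := hf'loc.aestronglyMeasurable
  have hC0 : 0 ≤ C := integral_nonneg fun t =>
    div_nonneg (mul_nonneg (hΦ0 t) (by linarith [hΦ1 t])) (hψ0 t)
  have hD0 : 0 ≤ D := integral_nonneg fun t => mul_nonneg (sq_nonneg _) (hψ0 t)
  have hΦIoi : ∀ t, ∫ x in Ioi t, ρ x = 1 - Φ t := by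
    intro t
    have h := integral_add_compl (measurableSet_Iic : MeasurableSet (Iic t)) hρint
    rw [compl_Iic, hρ1] at h
    rw [hΦ t]; linarith
  set g : ℝ → ℝ → ℝ := fun x t => Φ t - if x ≤ t then 1 else 0 with hgdef
  have hg_sq : ∀ x t, (g x t) ^ 2 / ψ t =
      (Iio x).indicator (fun t => (Φ t) ^ 2 / ψ t) t
        + (Ici x).indicator (fun t => (1 - Φ t) ^ 2 / ψ t) t := by
    intro x t
    by_cases h : x ≤ t
    · rw [Set.indicator_of_notMem (by simpa using h),
        Set.indicator_of_mem (by simpa using h), zero_add]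
      simp only [hgdef, if_pos h]
      ring
    · rw [Set.indicator_of_mem (by simpa using not_le.1 h),
        Set.indicator_of_notMem (by simpa using not_le.1 h), add_zero]
      simp only [hgdef, if_neg h]
      ring
  have hmeasΦ2ψ : AEStronglyMeasurable (fun t => (Φ t) ^ 2 / ψ t) volume :=
    (((hΦmeas.pow_const 2).aemeasurable).div hψaem).aestronglyMeasurable
  have hmeas1Φ2ψ : AEStronglyMeasurable (fun t => (1 - Φ t) ^ 2 / ψ t) volume :=
    ((((measurable_const.sub hΦmeas).pow_const 2).aemeasurable).div hψaem).aestronglyMeasurable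
  have hInt1 : ∀ x, IntegrableOn (fun t => (Φ t) ^ 2 / ψ t) (Iio x) := by
    intro x
    have hb : IntegrableOn (fun t => Φ t / ψ t) (Iio x) :=
      ((hstrong x).1).mono_set Iio_subset_Iic_self
    refine Integrable.mono' hb hmeasΦ2ψ.restrict (Filter.Eventually.of_forall fun t => ?_)
    rw [Real.norm_eq_abs, abs_div, abs_of_nonneg (sq_nonneg _), abs_of_nonneg (hψ0 t)]
    have h1 : (Φ t) ^ 2 ≤ Φ t := by nlinarith [hΦ0 t, hΦ1 t]
    exact div_le_div_of_nonneg_right h1 (hψ0 t)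
  have hInt2 : ∀ x, IntegrableOn (fun t => (1 - Φ t) ^ 2 / ψ t) (Ici x) := by
    intro x
    refine Integrable.mono' ((hstrong x).2) hmeas1Φ2ψ.restrict
      (Filter.Eventually.of_forall fun t => ?_)
    rw [Real.norm_eq_abs, abs_div, abs_of_nonneg (sq_nonneg _), abs_of_nonneg (hψ0 t)]
    have h1 : (1 - Φ t) ^ 2 ≤ 1 - Φ t := by nlinarith [hΦ0 t, hΦ1 t]
    exact div_le_div_of_nonneg_right h1 (hψ0 t)
  have intJ : ∀ x, Integrable (fun t => (g x t) ^ 2 / ψ t) := by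
    intro x
    have h1 := (integrable_indicator_iff measurableSet_Iio).2 (hInt1 x)
    have h2 := (integrable_indicator_iff measurableSet_Ici).2 (hInt2 x)
    exact (h1.add h2).congr (Filter.Eventually.of_forall fun t => (hg_sq x t).symm)
  set J : ℝ → ℝ := fun x => ∫ t, (g x t) ^ 2 / ψ t with hJdef
  have hJ0 : ∀ x, 0 ≤ J x := fun x =>
    integral_nonneg fun t => div_nonneg (sq_nonneg _) (hψ0 t)
  have hJeq : ∀ x, J x = (∫ t in Iio x, (Φ t) ^ 2 / ψ t)
      + ∫ t in Ici x, (1 - Φ t) ^ 2 / ψ t := by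
    intro x
    have h1 := (integrable_indicator_iff measurableSet_Iio).2 (hInt1 x)
    have h2 := (integrable_indicator_iff measurableSet_Ici).2 (hInt2 x)
    calc J x = ∫ t, ((Iio x).indicator (fun t => (Φ t) ^ 2 / ψ t) t
        + (Ici x).indicator (fun t => (1 - Φ t) ^ 2 / ψ t) t) :=
          integral_congr_ae (Filter.Eventually.of_forall (hg_sq x))
      _ = _ := by
          rw [integral_add h1 h2, integral_indicator measurableSet_Iio,
            integral_indicator measurableSet_Ici]
  have hJmeas : Measurable J := by
    have hA : Monotone (fun x => ∫ t in Iio x, (Φ t) ^ 2 / ψ t) := fun a b hab =>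
      setIntegral_mono_set (hInt1 b)
        (Filter.Eventually.of_forall fun t => div_nonneg (sq_nonneg _) (hψ0 t))
        ((Iio_subset_Iio hab).eventuallyLE)
    have hB : Antitone (fun x => ∫ t in Ici x, (1 - Φ t) ^ 2 / ψ t) := fun a b hab =>
      setIntegral_mono_set (hInt2 a)
        (Filter.Eventually.of_forall fun t => div_nonneg (sq_nonneg _) (hψ0 t))
        ((Ici_subset_Ici.2 hab).eventuallyLE)
    have hJfun : J = fun x => (∫ t in Iio x, (Φ t) ^ 2 / ψ t)
        + ∫ t in Ici x, (1 - Φ t) ^ 2 / ψ t := funext hJeq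
    rw [hJfun]
    exact hA.measurable.add hB.measurable
  -- L² functions for Cauchy-Schwarz
  set u : ℝ → ℝ := fun t => f' t * Real.sqrt (ψ t) with hudef
  have hsqrtψ : AEMeasurable (fun t => Real.sqrt (ψ t)) :=
    Real.continuous_sqrt.measurable.comp_aemeasurable hψaem
  have husm : AEStronglyMeasurable u volume :=
    (hf'sm.aemeasurable.mul hsqrtψ).aestronglyMeasurable
  have hu2 : ∀ t, u t ^ 2 = f' t ^ 2 * ψ t := fun t => by
    simp only [hudef, mul_pow, Real.sq_sqrt (hψ0 t)]
  have huL2 : MemLp u 2 volume :=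
    (memLp_two_iff_integrable_sq husm).2
      (hf'L2.congr (Filter.Eventually.of_forall fun t => (hu2 t).symm))
  have hgxsm : ∀ x, AEStronglyMeasurable (fun t => g x t) volume := fun x => by
    have hm : Measurable (fun t => g x t) := by
      simp only [hgdef]
      exact hΦmeas.sub (Measurable.ite (measurableSet_Ici : MeasurableSet (Ici x))
        measurable_const measurable_const)
    exact hm.aestronglyMeasurable
  set v : ℝ → ℝ → ℝ := fun x t => g x t / Real.sqrt (ψ t) with hvdef
  have hv2 : ∀ x t, v x t ^ 2 = (g x t) ^ 2 / ψ t := fun x t => by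
    simp only [hvdef, div_pow, Real.sq_sqrt (hψ0 t)]
  have hvsm : ∀ x, AEStronglyMeasurable (v x) volume := fun x =>
    ((hgxsm x).aemeasurable.div hsqrtψ).aestronglyMeasurable
  have hvL2 : ∀ x, MemLp (v x) 2 volume := fun x =>
    (memLp_two_iff_integrable_sq (hvsm x)).2
      ((intJ x).congr (Filter.Eventually.of_forall fun t => (hv2 x t).symm))
  have huv : ∀ x t, u t * v x t = f' t * g x t := by
    intro x t
    have hs : Real.sqrt (ψ t) ≠ 0 := ne_of_gt (Real.sqrt_pos.2 (hψpos t))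
    simp only [hudef, hvdef]
    field_simp
  have hGint : ∀ x, Integrable (fun t => f' t * g x t) := by
    intro x
    have h1 : MemLp (fun t => v x t • u t) 1 volume :=
      huL2.smul (hvL2 x)
    refine (memLp_one_iff_integrable.1 h1).congr (Filter.Eventually.of_forall fun t => ?_)
    simp only [smul_eq_mul]
    rw [mul_comm, huv x t]
  set G : ℝ → ℝ := fun x => ∫ t, f' t * g x t with hGdef
  have hCS : ∀ x, (G x) ^ 2 ≤ D * J x := by
    intro x
    have h22 : Real.HolderConjugate 2 2 := Real.HolderConjugate.two_two
    have hu2' : MemLp u (ENNReal.ofReal 2) volume := by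
      rw [ENNReal.ofReal_ofNat]; exact huL2
    have hv2' : MemLp (v x) (ENNReal.ofReal 2) volume := by
      rw [ENNReal.ofReal_ofNat]; exact hvL2 x
    have hH := integral_mul_norm_le_Lp_mul_Lq h22 hu2' hv2'
    have hnormu : (∫ t, ‖u t‖ ^ (2 : ℝ)) = D := by
      rw [hDdef]
      refine integral_congr_ae (Filter.Eventually.of_forall fun t => ?_)
      show ‖u t‖ ^ (2 : ℝ) = f' t ^ 2 * ψ t
      rw [Real.rpow_two, Real.norm_eq_abs, sq_abs, hu2 t]
    have hnormv : (∫ t, ‖v x t‖ ^ (2 : ℝ)) = J x := by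
      refine integral_congr_ae (Filter.Eventually.of_forall fun t => ?_)
      show ‖v x t‖ ^ (2 : ℝ) = g x t ^ 2 / ψ t
      rw [Real.rpow_two, Real.norm_eq_abs, sq_abs, hv2 x t]
    rw [hnormu, hnormv] at hH
    have hGle : |G x| ≤ D ^ ((1 : ℝ)/2) * J x ^ ((1 : ℝ)/2) := by
      refine le_trans ?_ hH
      calc |G x| = ‖∫ t, f' t * g x t‖ := (Real.norm_eq_abs _).symm
        _ ≤ ∫ t, ‖f' t * g x t‖ := norm_integral_le_integral_norm _
        _ = ∫ t, ‖u t‖ * ‖v x t‖ := integral_congr_ae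
              (Filter.Eventually.of_forall fun t => by
                show ‖f' t * g x t‖ = ‖u t‖ * ‖v x t‖
                rw [← huv x t, norm_mul])
    calc (G x) ^ 2 = |G x| ^ 2 := (sq_abs _).symm
      _ ≤ (D ^ ((1 : ℝ)/2) * J x ^ ((1 : ℝ)/2)) ^ 2 :=
          pow_le_pow_left₀ (abs_nonneg _) hGle 2
      _ = D * J x := by
          rw [mul_pow, ← Real.rpow_two, ← Real.rpow_two, ← Real.rpow_mul hD0,
            ← Real.rpow_mul (hJ0 x)]
          norm_num
  -- G x - G y = f x - f y
  have key : ∀ x y, y ≤ x → G x - G y = f x - f y := by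
    intro x y hyx
    have h2 : ∀ t, f' t * g x t - f' t * g y t = (Ico y x).indicator f' t := by
      intro t
      simp only [hgdef, Set.indicator_apply, mem_Ico]
      by_cases h1t : y ≤ t
      · by_cases h2t : x ≤ t
        · rw [if_pos h2t, if_pos h1t, if_neg (fun hc => absurd hc.2 (not_lt.2 h2t))]
          ring
        · rw [if_neg h2t, if_pos h1t, if_pos ⟨h1t, not_le.1 h2t⟩]
          ring
      · have h2t : ¬ x ≤ t := fun h => h1t (hyx.trans h)
        rw [if_neg h2t, if_neg h1t, if_neg (fun hc => absurd hc.1 h1t)]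
        ring
    have h3 : G x - G y = ∫ t, ((Ico y x).indicator f' t) := by
      rw [show G x = ∫ t, f' t * g x t from rfl, show G y = ∫ t, f' t * g y t from rfl,
        ← integral_sub (hGint x) (hGint y)]
      exact integral_congr_ae (Filter.Eventually.of_forall h2)
    rw [h3, integral_indicator measurableSet_Ico, integral_Ico_eq_integral_Ioo,
      ← integral_Ioc_eq_integral_Ioo, hAC y x, intervalIntegral.integral_of_le hyx]
  have hGf : ∀ x, G x = f x + (G 0 - f 0) := by
    intro x
    rcases le_total 0 x with h | h
    · have := key x 0 h; linarith
    · have := key 0 x h; linarith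
  set K : ℝ := G 0 - f 0 with hKdef
  -- Tonelli
  have hFn_meas : AEMeasurable
      (Function.uncurry fun x t => ENNReal.ofReal (ρ x * (g x t ^ 2 / ψ t)))
      ((volume : Measure ℝ).prod volume) := by
    have h1 : AEMeasurable (fun p : ℝ × ℝ => ρ p.1) ((volume : Measure ℝ).prod volume) :=
      hρaem.comp_quasiMeasurePreserving Measure.quasiMeasurePreserving_fst
    have h2 : Measurable (fun p : ℝ × ℝ => g p.1 p.2) := by
      simp only [hgdef]
      exact (hΦmeas.comp measurable_snd).sub
        (Measurable.ite (measurableSet_le measurable_fst measurable_snd)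
          measurable_const measurable_const)
    have h3 : AEMeasurable (fun p : ℝ × ℝ => ψ p.2) ((volume : Measure ℝ).prod volume) :=
      hψaem.comp_quasiMeasurePreserving Measure.quasiMeasurePreserving_snd
    exact ENNReal.measurable_ofReal.comp_aemeasurable
      (h1.mul (((h2.pow_const 2).aemeasurable).div h3))
  have hL : ∀ x, (∫⁻ t, ENNReal.ofReal (ρ x * (g x t ^ 2 / ψ t)))
      = ENNReal.ofReal (ρ x * J x) := by
    intro x
    rw [← ofReal_integral_eq_lintegral_ofReal ((intJ x).const_mul (ρ x))
      (Filter.Eventually.of_forall fun t =>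
        mul_nonneg (hρ0 x) (div_nonneg (sq_nonneg _) (hψ0 t))),
      integral_const_mul]
  have hR : ∀ t, (∫⁻ x, ENNReal.ofReal (ρ x * (g x t ^ 2 / ψ t)))
      = ENNReal.ofReal (Φ t * (1 - Φ t) / ψ t) := by
    intro t
    have hdec : ∀ x, ρ x * (g x t ^ 2 / ψ t) =
        (Iic t).indicator (fun x => ρ x * ((1 - Φ t) ^ 2 / ψ t)) x
          + (Ioi t).indicator (fun x => ρ x * ((Φ t) ^ 2 / ψ t)) x := by
      intro x
      by_cases h : x ≤ t
      · rw [Set.indicator_of_mem (by simpa using h),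
          Set.indicator_of_notMem (by simpa using h), add_zero]
        simp only [hgdef, if_pos h]
        ring
      · rw [Set.indicator_of_notMem (by simpa using h),
          Set.indicator_of_mem (by simpa using not_le.1 h), zero_add]
        simp only [hgdef, if_neg h]
        ring
    have hi1 : Integrable ((Iic t).indicator (fun x => ρ x * ((1 - Φ t) ^ 2 / ψ t))) :=
      (integrable_indicator_iff measurableSet_Iic).2 ((hρint.mul_const _).integrableOn)
    have hi2 : Integrable ((Ioi t).indicator (fun x => ρ x * ((Φ t) ^ 2 / ψ t))) :=
      (integrable_indicator_iff measurableSet_Ioi).2 ((hρint.mul_const _).integrableOn)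
    have hInt : Integrable (fun x => ρ x * (g x t ^ 2 / ψ t)) :=
      (hi1.add hi2).congr (Filter.Eventually.of_forall fun x => (hdec x).symm)
    rw [← ofReal_integral_eq_lintegral_ofReal hInt
      (Filter.Eventually.of_forall fun x =>
        mul_nonneg (hρ0 x) (div_nonneg (sq_nonneg _) (hψ0 t)))]
    congr 1
    have hψne : ψ t ≠ 0 := (hψpos t).ne'
    rw [integral_congr_ae (Filter.Eventually.of_forall hdec), integral_add hi1 hi2,
      integral_indicator measurableSet_Iic, integral_indicator measurableSet_Ioi,
      integral_mul_const, integral_mul_const, hΦIoi t, ← hΦ t]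
    field_simp
    ring
  have hRint : (∫⁻ t, ENNReal.ofReal (Φ t * (1 - Φ t) / ψ t)) = ENNReal.ofReal C :=
    (ofReal_integral_eq_lintegral_ofReal hC (Filter.Eventually.of_forall fun t =>
      div_nonneg (mul_nonneg (hΦ0 t) (by linarith [hΦ1 t])) (hψ0 t))).symm
  have hkey : (∫⁻ x, ENNReal.ofReal (ρ x * J x)) = ENNReal.ofReal C := by
    calc (∫⁻ x, ENNReal.ofReal (ρ x * J x))
        = ∫⁻ x, ∫⁻ t, ENNReal.ofReal (ρ x * (g x t ^ 2 / ψ t)) :=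
          lintegral_congr fun x => (hL x).symm
      _ = ∫⁻ t, ∫⁻ x, ENNReal.ofReal (ρ x * (g x t ^ 2 / ψ t)) :=
          lintegral_lintegral_swap hFn_meas
      _ = ∫⁻ t, ENNReal.ofReal (Φ t * (1 - Φ t) / ψ t) := lintegral_congr fun t => hR t
      _ = ENNReal.ofReal C := hRint
  have hρJsm : AEStronglyMeasurable (fun x => ρ x * J x) volume :=
    (hρaem.mul hJmeas.aemeasurable).aestronglyMeasurable
  have hρJnn : 0 ≤ᵐ[volume] fun x => ρ x * J x :=
    Filter.Eventually.of_forall fun x => mul_nonneg (hρ0 x) (hJ0 x)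
  have hρJint : Integrable (fun x => ρ x * J x) := by
    refine ⟨hρJsm, ?_⟩
    rw [hasFiniteIntegral_iff_ofReal hρJnn, hkey]
    exact ENNReal.ofReal_lt_top
  have hρJval : ∫ x, ρ x * J x = C := by
    rw [integral_eq_lintegral_of_nonneg_ae hρJnn hρJsm, hkey, ENNReal.toReal_ofReal hC0]
  -- first inequality : m^2 ≤ V
  have hexp1 : ∫ x, (f x - m) ^ 2 * ρ x = V - 2 * m * m + m ^ 2 := by
    have hfun : (fun x => (f x - m) ^ 2 * ρ x)
        = fun x => f x ^ 2 * ρ x - (2 * m) * (f x * ρ x) + m ^ 2 * ρ x :=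
      funext fun x => by ring
    have hi1 : Integrable (fun x => f x ^ 2 * ρ x - 2 * m * (f x * ρ x)) :=
      hfL2.sub (hfL1.const_mul (2 * m))
    have hi2 : Integrable (fun x => m ^ 2 * ρ x) := hρint.const_mul (m ^ 2)
    rw [hfun, integral_add hi1 hi2,
      integral_sub hfL2 (hfL1.const_mul (2 * m)), integral_const_mul, integral_const_mul,
      hρ1, ← hmdef, ← hVdef]
    ring
  have hm2V : m ^ 2 ≤ V := by
    have hvar : 0 ≤ ∫ x, (f x - m) ^ 2 * ρ x :=
      integral_nonneg fun x => mul_nonneg (sq_nonneg _) (hρ0 x)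
    nlinarith [hexp1]
  -- second inequality : V - m^2 ≤ D * C
  have hintfK : Integrable (fun x => (f x + K) ^ 2 * ρ x) := by
    have hfun : (fun x => f x ^ 2 * ρ x + (2 * K) * (f x * ρ x) + K ^ 2 * ρ x)
        = fun x => (f x + K) ^ 2 * ρ x := funext fun x => by ring
    exact hfun ▸ ((hfL2.add (hfL1.const_mul (2 * K))).add (hρint.const_mul (K ^ 2)))
  have hquad : ∫ x, (f x + K) ^ 2 * ρ x = V + 2 * K * m + K ^ 2 := by
    have hfun : (fun x => (f x + K) ^ 2 * ρ x)
        = fun x => f x ^ 2 * ρ x + (2 * K) * (f x * ρ x) + K ^ 2 * ρ x :=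
      funext fun x => by ring
    have hi1 : Integrable (fun x => f x ^ 2 * ρ x + 2 * K * (f x * ρ x)) :=
      hfL2.add (hfL1.const_mul (2 * K))
    have hi2 : Integrable (fun x => K ^ 2 * ρ x) := hρint.const_mul (K ^ 2)
    rw [hfun, integral_add hi1 hi2,
      integral_add hfL2 (hfL1.const_mul (2 * K)), integral_const_mul, integral_const_mul,
      hρ1, ← hmdef, ← hVdef]
    ring
  have hmono : ∫ x, (f x + K) ^ 2 * ρ x ≤ ∫ x, D * (ρ x * J x) := by
    refine integral_mono hintfK (hρJint.const_mul D) fun x => ?_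
    have h1 : (f x + K) ^ 2 ≤ D * J x := by
      have := hCS x
      rw [hGf x] at this
      exact this
    nlinarith [hρ0 x, h1, hJ0 x]
  have hDC : ∫ x, D * (ρ x * J x) = D * C := by rw [integral_const_mul, hρJval]
  have hVbound : V - m ^ 2 ≤ D * C := by nlinarith [hquad, hmono, sq_nonneg (m + K), hDC]
  constructor
  · nlinarith [hm2V]
  · have hexpand : (1 + γ * C) * (m ^ 2 + 1 / γ * D)
        = m ^ 2 + 1 / γ * D + γ * C * m ^ 2 + C * D := by
      field_simp
      ring
    have hγCm : 0 ≤ γ * C * m ^ 2 :=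
      mul_nonneg (mul_nonneg hγ.le hC0) (sq_nonneg m)
    nlinarith [hVbound, hexpand, hγCm]
end

section
/- Let ρ be the standard normal density and ψ(x) = exp(-(3/4)x²). Then f(x) = 1/√(ρ(x)) = (2π)^{1/4} exp(x²/4) satisfies f ∈ L¹_ρ and f' ∈ L²_ψ (so f ∈ 𝒲), but f ∉ L²_ρ (so f ∉ ℋ). Hence 𝒲 is strictly larger than ℋ for this choice of weights. -/
open MeasureTheory Real Set

lemma sq_mul_exp_int : Integrable fun x : ℝ => x ^ 2 * Real.exp (-(1/4) * x ^ 2) := by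
  have h8 : Integrable fun x : ℝ => 8 * Real.exp (-(1/8) * x ^ 2) :=
    (integrable_exp_neg_mul_sq (by norm_num)).const_mul 8
  refine h8.mono' ?_ ?_
  · exact (Measurable.aestronglyMeasurable (by measurability))
  · filter_upwards with x
    have h1 : x ^ 2 / 8 ≤ Real.exp (x ^ 2 / 8) := (Real.add_one_le_exp _).trans' (by linarith)
    have h2 : x ^ 2 ≤ 8 * Real.exp (x ^ 2 / 8) := by linarith
    have h3 : x ^ 2 * Real.exp (-(1/4) * x ^ 2) ≤
        (8 * Real.exp (x ^ 2 / 8)) * Real.exp (-(1/4) * x ^ 2) :=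
      mul_le_mul_of_nonneg_right h2 (Real.exp_pos _).le
    rw [Real.norm_of_nonneg (by positivity)]
    calc x ^ 2 * Real.exp (-(1/4) * x ^ 2)
        ≤ (8 * Real.exp (x ^ 2 / 8)) * Real.exp (-(1/4) * x ^ 2) := h3
      _ = 8 * Real.exp (-(1/8) * x ^ 2) := by
          rw [mul_assoc, ← Real.exp_add]; ring_nf

theorem stmt15 (ρ ψ f : ℝ → ℝ)
    (hρ : ∀ x, ρ x = (Real.sqrt (2 * π))⁻¹ * Real.exp (-x ^ 2 / 2))
    (hψ : ∀ x, ψ x = Real.exp (-(3 / 4) * x ^ 2))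
    (hf : ∀ x, f x = (2 * π) ^ ((1 : ℝ) / 4) * Real.exp (x ^ 2 / 4)) :
    Integrable (fun x => |f x| * ρ x) ∧
    Integrable (fun x => (deriv f x) ^ 2 * ψ x) ∧
    ¬ Integrable (fun x => f x ^ 2 * ρ x) := by
  set c : ℝ := (2 * π) ^ ((1 : ℝ) / 4) with hc
  have hπ : (0:ℝ) < 2 * π := by positivity
  have hcpos : 0 < c := Real.rpow_pos_of_pos hπ _
  have hc2 : c ^ 2 = Real.sqrt (2 * π) := by
    rw [hc, ← Real.rpow_natCast ((2*π) ^ ((1:ℝ)/4)) 2, ← Real.rpow_mul hπ.le,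
      Real.sqrt_eq_rpow]
    norm_num
  have hderiv : ∀ x : ℝ, deriv f x = c * (Real.exp (x ^ 2 / 4) * (x / 2)) := by
    intro x
    have hfe : f = fun x => c * Real.exp (x ^ 2 / 4) := funext hf
    have h1 : HasDerivAt (fun x : ℝ => x ^ 2 / 4) (2 * x / 4) x := by
      simpa using (hasDerivAt_pow 2 x).div_const 4
    have h2 : HasDerivAt f (c * (Real.exp (x ^ 2 / 4) * (2 * x / 4))) x := by
      rw [hfe]; exact (h1.exp).const_mul c
    rw [h2.deriv]; ring
  refine ⟨?_, ?_, ?_⟩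
  · have : (fun x => |f x| * ρ x) =
        fun x => (c * (Real.sqrt (2 * π))⁻¹) * Real.exp (-(1/4) * x ^ 2) := by
      funext x
      rw [hf, hρ, abs_of_pos (by positivity), mul_mul_mul_comm, ← Real.exp_add]
      ring_nf
    rw [this]
    exact (integrable_exp_neg_mul_sq (by norm_num)).const_mul _
  · have : (fun x => (deriv f x) ^ 2 * ψ x) =
        fun x => (c ^ 2 / 4) * (x ^ 2 * Real.exp (-(1/4) * x ^ 2)) := by
      funext x
      have he : Real.exp (x ^ 2 / 4) * Real.exp (x ^ 2 / 4) * Real.exp (-(3/4) * x ^ 2)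
          = Real.exp (-(1/4) * x ^ 2) := by
        rw [← Real.exp_add, ← Real.exp_add,
          show x ^ 2 / 4 + x ^ 2 / 4 + -(3/4) * x ^ 2 = -(1/4) * x ^ 2 from by ring]
      rw [hderiv, hψ]
      linear_combination (c ^ 2 * x ^ 2 / 4) * he
    rw [this]
    exact sq_mul_exp_int.const_mul _
  · have : (fun x => f x ^ 2 * ρ x) = fun _ : ℝ => (1:ℝ) := by
      funext x
      have he2 : Real.exp (x ^ 2 / 4) * Real.exp (x ^ 2 / 4) * Real.exp (-x ^ 2 / 2) = 1 := by
        rw [← Real.exp_add, ← Real.exp_add,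
          show x ^ 2 / 4 + x ^ 2 / 4 + -x ^ 2 / 2 = 0 from by ring, Real.exp_zero]
      have hs : Real.sqrt (2 * π) ≠ 0 := by positivity
      have hmul : c ^ 2 * (Real.sqrt (2 * π))⁻¹ = 1 := by rw [hc2]; field_simp
      rw [hf, hρ]
      linear_combination he2 +
        (Real.exp (x ^ 2 / 4) * Real.exp (x ^ 2 / 4) * Real.exp (-x ^ 2 / 2)) * hmul
    rw [this]
    simp [integrable_const_iff]
    intro h
    exact absurd (measure_lt_top volume (univ : Set ℝ)) (by simp [Real.volume_univ])
end

section
/- Let g ∈ L²_ψ(ℝ), let ρ be a probability density with CDF Φ, and assume the weaker condition ∫_{-∞}^a Φ²/ψ < ∞ and ∫_a^∞ (1-Φ)²/ψ < ∞. Then for any a ∈ ℝ, the function x ↦ ∫_a^x g(t) dt is integrable against ρ, with |∫_{-∞}^∞ (∫_a^x g(t) dt) ρ(x) dx| ≤ ‖g‖_{L²_ψ} [ (∫_{-∞}^a Φ²/ψ)^{1/2} + (∫_a^∞ (1-Φ)²/ψ)^{1/2} ]. -/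
open MeasureTheory Real Set

private lemma cs_aux {μ : Measure ℝ} {ψ g h : ℝ → ℝ}
    (hψpos : ∀ x, 0 < ψ x)
    (hψmeas : AEStronglyMeasurable ψ μ)
    (hgmeas : AEStronglyMeasurable g μ)
    (hhmeas : AEStronglyMeasurable h μ)
    (hg2 : Integrable (fun t => g t ^ 2 * ψ t) μ)
    (hh2 : Integrable (fun t => h t ^ 2 / ψ t) μ) :
    Integrable (fun t => g t * h t) μ ∧
      |∫ t, g t * h t ∂μ| ≤
        Real.sqrt (∫ t, g t ^ 2 * ψ t ∂μ) * Real.sqrt (∫ t, h t ^ 2 / ψ t ∂μ) := by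
  set G : ℝ → ℝ := fun t => g t * Real.sqrt (ψ t) with hGdef
  set H : ℝ → ℝ := fun t => h t * (Real.sqrt (ψ t))⁻¹ with hHdef
  have hψs : ∀ t, Real.sqrt (ψ t) ≠ 0 := fun t => (Real.sqrt_pos.2 (hψpos t)).ne'
  have hGH : ∀ t, G t * H t = g t * h t := by
    intro t
    have : G t * H t = g t * h t * (Real.sqrt (ψ t) * (Real.sqrt (ψ t))⁻¹) := by
      simp only [hGdef, hHdef]; ring
    rw [this, mul_inv_cancel₀ (hψs t), mul_one]
  have hGsq : ∀ t, G t ^ 2 = g t ^ 2 * ψ t := by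
    intro t; simp only [hGdef]; rw [mul_pow, Real.sq_sqrt (hψpos t).le]
  have hHsq : ∀ t, H t ^ 2 = h t ^ 2 / ψ t := by
    intro t; simp only [hHdef]
    rw [mul_pow, inv_pow, Real.sq_sqrt (hψpos t).le, div_eq_mul_inv]
  have hsψ : AEStronglyMeasurable (fun t => Real.sqrt (ψ t)) μ :=
    Real.continuous_sqrt.comp_aestronglyMeasurable hψmeas
  have hGm : AEStronglyMeasurable G μ := hgmeas.mul hsψ
  have hHm : AEStronglyMeasurable H μ := (hhmeas.aemeasurable.mul
    ((Real.continuous_sqrt.measurable.comp_aemeasurable hψmeas.aemeasurable).inv)).aestronglyMeasurable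
  have hG2 : MemLp G 2 μ := (memLp_two_iff_integrable_sq hGm).2
    (hg2.congr (Filter.Eventually.of_forall fun t => (hGsq t).symm))
  have hH2 : MemLp H 2 μ := (memLp_two_iff_integrable_sq hHm).2
    (hh2.congr (Filter.Eventually.of_forall fun t => (hHsq t).symm))
  have hmul : Integrable (fun t => g t * h t) μ := by
    have hs : MemLp (H • G) 1 μ := hG2.smul hH2 (hpqr := ⟨by
      simp only [one_div, inv_one]
      exact ENNReal.inv_two_add_inv_two⟩)
    have := memLp_one_iff_integrable.1 hs
    refine this.congr (Filter.Eventually.of_forall fun t => ?_)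
    simp only [Pi.smul_apply, smul_eq_mul]
    rw [mul_comm]; exact hGH t
  refine ⟨hmul, ?_⟩
  have h22 : Real.HolderConjugate 2 2 := Real.HolderConjugate.two_two
  have key := integral_mul_le_Lp_mul_Lq_of_nonneg (μ := μ) h22
    (f := fun t => ‖G t‖) (g := fun t => ‖H t‖)
    (Filter.Eventually.of_forall fun t => norm_nonneg _)
    (Filter.Eventually.of_forall fun t => norm_nonneg _)
    (by simpa using hG2.norm) (by simpa using hH2.norm)
  have hpow : ∀ x : ℝ, ‖x‖ ^ (2:ℝ) = x ^ 2 := by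
    intro x
    rw [show (2:ℝ) = ((2:ℕ):ℝ) by norm_num, Real.rpow_natCast, Real.norm_eq_abs, sq_abs]
  have hintG : ∫ t, ‖G t‖ ^ (2:ℝ) ∂μ = ∫ t, g t ^ 2 * ψ t ∂μ :=
    integral_congr_ae (Filter.Eventually.of_forall fun t => by simp only [hpow, hGsq])
  have hintH : ∫ t, ‖H t‖ ^ (2:ℝ) ∂μ = ∫ t, h t ^ 2 / ψ t ∂μ :=
    integral_congr_ae (Filter.Eventually.of_forall fun t => by simp only [hpow, hHsq])
  calc |∫ t, g t * h t ∂μ| = ‖∫ t, g t * h t ∂μ‖ := (Real.norm_eq_abs _).symm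
    _ ≤ ∫ t, ‖g t * h t‖ ∂μ := norm_integral_le_integral_norm _
    _ = ∫ t, ‖G t‖ * ‖H t‖ ∂μ := integral_congr_ae
        (Filter.Eventually.of_forall fun t => by show ‖g t * h t‖ = ‖G t‖ * ‖H t‖; rw [← hGH t, norm_mul])
    _ ≤ (∫ t, ‖G t‖ ^ (2:ℝ) ∂μ) ^ (1/(2:ℝ)) * (∫ t, ‖H t‖ ^ (2:ℝ) ∂μ) ^ (1/(2:ℝ)) := key
    _ = _ := by rw [hintG, hintH, ← Real.sqrt_eq_rpow, ← Real.sqrt_eq_rpow]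

theorem stmt17 (ρ ψ Φ g : ℝ → ℝ)
    (hρpos : ∀ x, 0 < ρ x) (hρint : Integrable ρ) (hρ1 : ∫ x, ρ x = 1)
    (hψpos : ∀ x, 0 < ψ x)
    (hψloc : LocallyIntegrable ψ)
    (hψinvloc : LocallyIntegrable (fun x => 1 / ψ x))
    (hΦ : ∀ x, Φ x = ∫ t in Iic x, ρ t)
    (hgmeas : AEStronglyMeasurable g volume)
    (hgL2 : Integrable (fun t => g t ^ 2 * ψ t)) :
    ∀ a : ℝ,
      IntegrableOn (fun t => Φ t ^ 2 / ψ t) (Iic a) →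
      IntegrableOn (fun t => (1 - Φ t) ^ 2 / ψ t) (Ici a) →
      Integrable (fun x => (∫ t in a..x, g t) * ρ x) ∧
      |∫ x, (∫ t in a..x, g t) * ρ x| ≤
        Real.sqrt (∫ t, g t ^ 2 * ψ t) *
          (Real.sqrt (∫ t in Iic a, Φ t ^ 2 / ψ t)
            + Real.sqrt (∫ t in Ici a, (1 - Φ t) ^ 2 / ψ t)) := by
  intro a ha1 ha2
  have hψm : AEStronglyMeasurable ψ volume := hψloc.aestronglyMeasurable
  have hρm : AEStronglyMeasurable ρ volume := hρint.1
  -- Φ is monotone, hence measurable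
  have hΦmono : Monotone Φ := by
    intro s t hst
    rw [hΦ s, hΦ t]
    exact setIntegral_mono_set hρint.integrableOn
      (Filter.Eventually.of_forall fun x => (hρpos x).le)
      (HasSubset.Subset.eventuallyLE (Iic_subset_Iic.2 hst))
  have hΦmeas : AEStronglyMeasurable Φ volume := hΦmono.measurable.aestronglyMeasurable
  have h1Φmeas : AEStronglyMeasurable (fun t => 1 - Φ t) volume :=
    aestronglyMeasurable_const.sub hΦmeas
  -- identities for the CDF
  have hIio : ∀ t : ℝ, ∫ x in Iio t, ρ x = Φ t := by
    intro t; rw [← integral_Iic_eq_integral_Iio, hΦ]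
  have hIci : ∀ t : ℝ, ∫ x in Ici t, ρ x = 1 - Φ t := by
    intro t
    have h0 := integral_add_compl (measurableSet_Iic (a := t)) hρint
    rw [compl_Iic, hρ1, ← hΦ t] at h0
    rw [integral_Ici_eq_integral_Ioi]
    linarith
  -- local integrability of g
  have hgOn : ∀ b c : ℝ, IntegrableOn g (Ioc b c) := by
    intro b c
    have h1 : IntegrableOn (fun x => 1 / ψ x) (Ioc b c) :=
      (hψinvloc.integrableOn_isCompact isCompact_Icc).mono_set Ioc_subset_Icc_self
    have h2 : Integrable (fun t => (1:ℝ) ^ 2 / ψ t) (volume.restrict (Ioc b c)) :=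
      h1.congr (Filter.Eventually.of_forall fun t => by norm_num)
    have := (cs_aux hψpos (hψm.restrict) (hgmeas.restrict)
      (aestronglyMeasurable_const) (hgL2.restrict) h2).1
    exact this.congr (Filter.Eventually.of_forall fun t => by simp)
  -- the kernel on the product space
  set S₁ : Set (ℝ × ℝ) := {q | a < q.1 ∧ q.1 ≤ q.2} with hS₁def
  set S₂ : Set (ℝ × ℝ) := {q | q.2 < q.1 ∧ q.1 ≤ a} with hS₂def
  set F : ℝ × ℝ → ℝ := fun q => g q.1 * ρ q.2 with hFdef
  set k : ℝ × ℝ → ℝ := fun q => S₁.indicator F q - S₂.indicator F q with hkdef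
  have hS₁ : MeasurableSet S₁ :=
    (measurableSet_lt measurable_const measurable_fst).inter
      (measurableSet_le measurable_fst measurable_snd)
  have hS₂ : MeasurableSet S₂ :=
    (measurableSet_lt measurable_snd measurable_fst).inter
      (measurableSet_le measurable_fst measurable_const)
  have hFm : AEStronglyMeasurable F ((volume : Measure ℝ).prod volume) :=
    hgmeas.comp_fst.mul hρm.comp_snd
  have hkm : AEStronglyMeasurable k ((volume : Measure ℝ).prod volume) :=
    (hFm.indicator hS₁).sub (hFm.indicator hS₂)
  -- sections in t
  have hsec : ∀ t x : ℝ, k (t, x) =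
      if a < t then (Ici t).indicator (fun x => g t * ρ x) x
      else -((Iio t).indicator (fun x => g t * ρ x) x) := by
    intro t x
    simp only [hkdef]
    rcases lt_or_ge a t with h | h
    · rw [if_pos h]
      have h2 : (t, x) ∉ S₂ := fun hc => absurd hc.2 (not_le.2 h)
      rw [indicator_of_notMem h2, sub_zero]
      by_cases hx : t ≤ x
      · rw [indicator_of_mem (show (t, x) ∈ S₁ from ⟨h, hx⟩),
          indicator_of_mem (Set.mem_Ici.2 hx)]
      · rw [indicator_of_notMem (show (t, x) ∉ S₁ from fun hc => hx hc.2),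
          indicator_of_notMem (fun hc => hx (Set.mem_Ici.1 hc))]
    · rw [if_neg (not_lt.2 h)]
      have h1 : (t, x) ∉ S₁ := fun hc => absurd hc.1 (not_lt.2 h)
      rw [indicator_of_notMem h1, zero_sub, neg_inj]
      by_cases hx : x < t
      · rw [indicator_of_mem (show (t, x) ∈ S₂ from ⟨hx, h⟩),
          indicator_of_mem (Set.mem_Iio.2 hx)]
      · rw [indicator_of_notMem (show (t, x) ∉ S₂ from fun hc => hx hc.1),
          indicator_of_notMem (fun hc => hx (Set.mem_Iio.1 hc))]
  -- section integrability
  have hsecint : ∀ t : ℝ, Integrable (fun x => k (t, x)) volume := by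
    intro t
    rcases lt_or_ge a t with h | h
    · refine Integrable.congr ((hρint.const_mul (g t)).indicator
        (measurableSet_Ici (a := t))) ?_
      exact Filter.Eventually.of_forall fun x => by simp only [hsec t x, if_pos h]
    · refine Integrable.congr (((hρint.const_mul (g t)).indicator
        (measurableSet_Iio (a := t))).neg) ?_
      exact Filter.Eventually.of_forall fun x => by
        simp only [Pi.neg_apply, hsec t x, if_neg (not_lt.2 h)]
  -- norm integral of sections
  have hnorm : ∀ t : ℝ, (∫ x, ‖k (t, x)‖) =
      |g t| * (if a < t then 1 - Φ t else Φ t) := by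
    intro t
    rcases lt_or_ge a t with h | h
    · rw [if_pos h]
      calc (∫ x, ‖k (t, x)‖)
          = ∫ x, (Ici t).indicator (fun x => ‖g t * ρ x‖) x := by
            refine integral_congr_ae (Filter.Eventually.of_forall fun x => ?_)
            simp only [hsec t x, if_pos h]
            rw [norm_indicator_eq_indicator_norm]
        _ = ∫ x in Ici t, ‖g t * ρ x‖ := integral_indicator measurableSet_Ici
        _ = ∫ x in Ici t, |g t| * ρ x := by
            refine integral_congr_ae (Filter.Eventually.of_forall fun x => ?_)
            simp only [Real.norm_eq_abs, abs_mul, abs_of_pos (hρpos x)]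
        _ = |g t| * ∫ x in Ici t, ρ x := integral_const_mul _ _
        _ = |g t| * (1 - Φ t) := by rw [hIci]
    · rw [if_neg (not_lt.2 h)]
      calc (∫ x, ‖k (t, x)‖)
          = ∫ x, (Iio t).indicator (fun x => ‖g t * ρ x‖) x := by
            refine integral_congr_ae (Filter.Eventually.of_forall fun x => ?_)
            simp only [hsec t x, if_neg (not_lt.2 h)]
            rw [norm_neg, norm_indicator_eq_indicator_norm]
        _ = ∫ x in Iio t, ‖g t * ρ x‖ := integral_indicator measurableSet_Iio
        _ = ∫ x in Iio t, |g t| * ρ x := by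
            refine integral_congr_ae (Filter.Eventually.of_forall fun x => ?_)
            simp only [Real.norm_eq_abs, abs_mul, abs_of_pos (hρpos x)]
        _ = |g t| * ∫ x in Iio t, ρ x := integral_const_mul _ _
        _ = |g t| * Φ t := by rw [hIio]
  -- integrability of the weighted |g|
  have habsg : AEStronglyMeasurable (fun t => |g t|) volume := hgmeas.norm
  have habsg2 : Integrable (fun t => |g t| ^ 2 * ψ t) := by
    refine hgL2.congr (Filter.Eventually.of_forall fun t => ?_)
    simp only [sq_abs]
  have hwIic : IntegrableOn (fun t => |g t| * Φ t) (Iic a) :=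
    (cs_aux hψpos hψm.restrict habsg.restrict hΦmeas.restrict habsg2.restrict ha1).1
  have hwIoi : IntegrableOn (fun t => |g t| * (1 - Φ t)) (Ioi a) :=
    (cs_aux hψpos hψm.restrict habsg.restrict h1Φmeas.restrict habsg2.restrict
      (ha2.mono_set Ioi_subset_Ici_self)).1
  have hw : Integrable (fun t => |g t| * (if a < t then 1 - Φ t else Φ t)) := by
    rw [← integrableOn_univ, ← Set.Iic_union_Ioi (a := a)]
    refine IntegrableOn.union ?_ ?_
    · refine hwIic.congr_fun (fun t ht => ?_) measurableSet_Iic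
      simp only [if_neg (not_lt.2 (mem_Iic.1 ht))]
    · refine hwIoi.congr_fun (fun t ht => ?_) measurableSet_Ioi
      simp only [if_pos (mem_Ioi.1 ht)]
  -- integrability of k on the product
  have hkint : Integrable k ((volume : Measure ℝ).prod volume) := by
    refine (integrable_prod_iff hkm).2 ⟨Filter.Eventually.of_forall hsecint, ?_⟩
    refine hw.congr (Filter.Eventually.of_forall fun t => ?_)
    exact (hnorm t).symm
  -- section integrals in t (for fixed x)
  have hx : ∀ x : ℝ, (∫ t, k (t, x)) = (∫ t in a..x, g t) * ρ x := by
    intro x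
    have e1 : ∀ t : ℝ, k (t, x) = (Ioc a x).indicator (fun t => g t * ρ x) t
        - (Ioc x a).indicator (fun t => g t * ρ x) t := by
      intro t
      simp only [hkdef, hS₁def, hS₂def, hFdef, indicator_apply, mem_setOf_eq, mem_Ioc]
    have i1 : Integrable ((Ioc a x).indicator (fun t => g t * ρ x)) volume := by
      rw [integrable_indicator_iff measurableSet_Ioc]
      exact (hgOn a x).mul_const _
    have i2 : Integrable ((Ioc x a).indicator (fun t => g t * ρ x)) volume := by
      rw [integrable_indicator_iff measurableSet_Ioc]
      exact (hgOn x a).mul_const _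
    calc (∫ t, k (t, x))
        = ∫ t, ((Ioc a x).indicator (fun t => g t * ρ x) t
            - (Ioc x a).indicator (fun t => g t * ρ x) t) :=
          integral_congr_ae (Filter.Eventually.of_forall fun t => e1 t)
      _ = (∫ t, (Ioc a x).indicator (fun t => g t * ρ x) t)
            - ∫ t, (Ioc x a).indicator (fun t => g t * ρ x) t := integral_sub i1 i2
      _ = (∫ t in Ioc a x, g t * ρ x) - ∫ t in Ioc x a, g t * ρ x := by
          rw [integral_indicator measurableSet_Ioc, integral_indicator measurableSet_Ioc]
      _ = (∫ t in Ioc a x, g t) * ρ x - (∫ t in Ioc x a, g t) * ρ x := by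
          rw [integral_mul_const, integral_mul_const]
      _ = (∫ t in a..x, g t) * ρ x := by
          rw [intervalIntegral]
          ring
  -- the two marginal integrabilities
  have hGint : Integrable (fun x => (∫ t in a..x, g t) * ρ x) := by
    have h1 : Integrable (fun x => ∫ t, k (t, x)) volume := hkint.integral_prod_right
    exact h1.congr (Filter.Eventually.of_forall hx)
  refine ⟨hGint, ?_⟩
  -- swap the integrals
  have hswap : (∫ x, (∫ t in a..x, g t) * ρ x) = ∫ t, ∫ x, k (t, x) := by
    calc (∫ x, (∫ t in a..x, g t) * ρ x)
        = ∫ x, ∫ t, k (t, x) := integral_congr_ae (Filter.Eventually.of_forall fun x => (hx x).symm)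
      _ = ∫ t, ∫ x, k (t, x) := (integral_integral_swap hkint).symm
  -- inner integral in x for fixed t
  have hinner : ∀ t : ℝ, (∫ x, k (t, x)) =
      if a < t then g t * (1 - Φ t) else -(g t * Φ t) := by
    intro t
    rcases lt_or_ge a t with h | h
    · rw [if_pos h]
      calc (∫ x, k (t, x))
          = ∫ x, (Ici t).indicator (fun x => g t * ρ x) x :=
            integral_congr_ae (Filter.Eventually.of_forall fun x => by simp only [hsec t x, if_pos h])
        _ = ∫ x in Ici t, g t * ρ x := integral_indicator measurableSet_Ici
        _ = g t * ∫ x in Ici t, ρ x := integral_const_mul _ _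
        _ = g t * (1 - Φ t) := by rw [hIci]
    · rw [if_neg (not_lt.2 h)]
      calc (∫ x, k (t, x))
          = ∫ x, -((Iio t).indicator (fun x => g t * ρ x) x) :=
            integral_congr_ae (Filter.Eventually.of_forall fun x => by simp only [hsec t x, if_neg (not_lt.2 h)])
        _ = -∫ x, (Iio t).indicator (fun x => g t * ρ x) x := integral_neg _
        _ = -∫ x in Iio t, g t * ρ x := by rw [integral_indicator measurableSet_Iio]
        _ = -(g t * ∫ x in Iio t, ρ x) := by rw [integral_const_mul]
        _ = -(g t * Φ t) := by rw [hIio]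
  have hv : Integrable (fun t => ∫ x, k (t, x)) volume := hkint.integral_prod_left
  have hsplit : (∫ t, ∫ x, k (t, x)) =
      (∫ t in Ioi a, g t * (1 - Φ t)) - ∫ t in Iic a, g t * Φ t := by
    have h0 := integral_add_compl (measurableSet_Iic (a := a)) hv
    rw [compl_Iic] at h0
    have e1 : (∫ t in Iic a, ∫ x, k (t, x)) = -∫ t in Iic a, g t * Φ t := by
      rw [← integral_neg]
      refine setIntegral_congr_fun measurableSet_Iic fun t ht => ?_
      simp only [hinner t, if_neg (not_lt.2 (mem_Iic.1 ht))]
    have e2 : (∫ t in Ioi a, ∫ x, k (t, x)) = ∫ t in Ioi a, g t * (1 - Φ t) := by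
      refine setIntegral_congr_fun measurableSet_Ioi fun t ht => ?_
      simp only [hinner t, if_pos (mem_Ioi.1 ht)]
    rw [e1, e2] at h0
    linarith
  -- Cauchy-Schwarz bounds
  have hb1 := (cs_aux hψpos hψm.restrict hgmeas.restrict hΦmeas.restrict hgL2.restrict ha1).2
  have hb2 := (cs_aux hψpos hψm.restrict hgmeas.restrict h1Φmeas.restrict hgL2.restrict
    (ha2.mono_set Ioi_subset_Ici_self)).2
  have hg2nn : ∀ t : ℝ, 0 ≤ g t ^ 2 * ψ t := fun t => mul_nonneg (sq_nonneg _) (hψpos t).le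
  have hle1 : Real.sqrt (∫ t in Iic a, g t ^ 2 * ψ t) ≤ Real.sqrt (∫ t, g t ^ 2 * ψ t) :=
    Real.sqrt_le_sqrt (setIntegral_le_integral hgL2 (Filter.Eventually.of_forall hg2nn))
  have hle2 : Real.sqrt (∫ t in Ioi a, g t ^ 2 * ψ t) ≤ Real.sqrt (∫ t, g t ^ 2 * ψ t) :=
    Real.sqrt_le_sqrt (setIntegral_le_integral hgL2 (Filter.Eventually.of_forall hg2nn))
  have hIoiIci : (∫ t in Ioi a, (1 - Φ t) ^ 2 / ψ t) = ∫ t in Ici a, (1 - Φ t) ^ 2 / ψ t :=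
    (integral_Ici_eq_integral_Ioi).symm
  rw [hswap, hsplit]
  have sqnn : ∀ x : ℝ, 0 ≤ Real.sqrt x := fun x => Real.sqrt_nonneg x
  calc |(∫ t in Ioi a, g t * (1 - Φ t)) - ∫ t in Iic a, g t * Φ t|
      ≤ |∫ t in Ioi a, g t * (1 - Φ t)| + |∫ t in Iic a, g t * Φ t| := abs_sub _ _
    _ ≤ Real.sqrt (∫ t in Ioi a, g t ^ 2 * ψ t) * Real.sqrt (∫ t in Ioi a, (1 - Φ t) ^ 2 / ψ t)
        + Real.sqrt (∫ t in Iic a, g t ^ 2 * ψ t) * Real.sqrt (∫ t in Iic a, Φ t ^ 2 / ψ t) :=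
        add_le_add hb2 hb1
    _ ≤ Real.sqrt (∫ t, g t ^ 2 * ψ t) * Real.sqrt (∫ t in Ici a, (1 - Φ t) ^ 2 / ψ t)
        + Real.sqrt (∫ t, g t ^ 2 * ψ t) * Real.sqrt (∫ t in Iic a, Φ t ^ 2 / ψ t) := by
        rw [← hIoiIci]
        exact add_le_add (mul_le_mul_of_nonneg_right hle2 (sqnn _))
          (mul_le_mul_of_nonneg_right hle1 (sqnn _))
    _ = Real.sqrt (∫ t, g t ^ 2 * ψ t) *
        (Real.sqrt (∫ t in Iic a, Φ t ^ 2 / ψ t)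
          + Real.sqrt (∫ t in Ici a, (1 - Φ t) ^ 2 / ψ t)) := by ring
end
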